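/- arXiv:0806.4199 — 7 statements merged into one kernel-verified Lean document; each statement's English description precedes it below -/
import Mathlib

section
/- Let A be a real m×m matrix, B ∈ ℝ^m a column vector, C ∈ ℝ^m a row vector (identified with c ∈ ℝ^m), D ∈ ℝ, and ε > 0. Suppose the matrices (P, L, J), with P an m×m symmetric positive definite matrix, L ∈ ℝ^{p×m} and J ∈ ℝ^p, satisfy the ε-KYP conditions for (A, B, C, D): PA + AᵀP = −LᵀL − (ε/2)P, PB = Cᵀ − LᵀJ, JᵀJ = 2D. Let u : ℝ → ℝ be a function and let x : ℝ → ℝ^m be differentiable with x'(t) = A x(t) + B u(t) for all t, and set y(t) = C x(t) + D u(t) and V(t) = (1/2) x(t)ᵀ P x(t). Then for all t, V'(t) = −(ε/2) V(t) − (1/2)‖L x(t) + J u(t)‖² + u(t) y(t). -/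
open Matrix

/-- The dissipation identity underlying the generalized passivity lemma:
given matrices `(P, L, J)` satisfying the ε-KYP conditions for `(A, B, C, D)`,
the storage function `V(t) = (1/2) x(t)ᵀ P x(t)` along any trajectory of
`x' = A x + B u`, with output `y = C x + D u`, satisfies
`V' = -(ε/2) V - (1/2)‖L x + J u‖² + u y`. -/
theorem dissipation_identity {m p : ℕ}
    (A : Matrix (Fin m) (Fin m) ℝ) (B : Fin m → ℝ) (C : Fin m → ℝ) (D : ℝ)
    (ε : ℝ) (hε : 0 < ε)
    (P : Matrix (Fin m) (Fin m) ℝ) (hP : P.PosDef)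
    (L : Matrix (Fin p) (Fin m) ℝ) (J : Fin p → ℝ)
    (hKYP1 : P * A + Aᵀ * P = -(Lᵀ * L) - (ε / 2) • P)
    (hKYP2 : P.mulVec B = C - Lᵀ.mulVec J)
    (hKYP3 : J ⬝ᵥ J = 2 * D)
    (u : ℝ → ℝ) (x : ℝ → Fin m → ℝ)
    (hx : ∀ t, HasDerivAt x (A.mulVec (x t) + u t • B) t)
    (y : ℝ → ℝ) (hy : ∀ t, y t = C ⬝ᵥ x t + D * u t)
    (V : ℝ → ℝ) (hV : ∀ t, V t = (1 / 2) * (x t ⬝ᵥ P.mulVec (x t))) :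
    ∀ t, HasDerivAt V
      (-(ε / 2) * V t
        - (1 / 2) * ((L.mulVec (x t) + u t • J) ⬝ᵥ (L.mulVec (x t) + u t • J))
        + u t * y t) t := by
  have hPt : Pᵀ = P := hP.isHermitian.eq
  intro t
  set x0 := x t with hx0
  set u0 := u t with hu0
  set w := A.mulVec x0 + u0 • B with hw
  have hxi : ∀ i, HasDerivAt (fun s => x s i) (w i) t := fun i =>
    (hasDerivAt_pi.mp (hx t)) i
  -- derivative of the quadratic form
  have hQ : HasDerivAt (fun s => x s ⬝ᵥ P.mulVec (x s))
      (w ⬝ᵥ P.mulVec x0 + x0 ⬝ᵥ P.mulVec w) t := by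
    have h : HasDerivAt (fun s => ∑ i, x s i * ∑ j, P i j * x s j)
        (∑ i, (w i * ∑ j, P i j * x0 j + x0 i * ∑ j, P i j * w j)) t := by
      apply HasDerivAt.fun_sum
      intro i _
      exact (hxi i).mul (HasDerivAt.fun_sum fun j _ => (hxi j).const_mul (P i j))
    have hf : (fun s => x s ⬝ᵥ P.mulVec (x s)) = fun s => ∑ i, x s i * ∑ j, P i j * x s j := by
      funext s; simp [dotProduct, mulVec]
    have hv : w ⬝ᵥ P.mulVec x0 + x0 ⬝ᵥ P.mulVec w
        = ∑ i, (w i * ∑ j, P i j * x0 j + x0 i * ∑ j, P i j * w j) := by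
      simp [dotProduct, mulVec, Finset.sum_add_distrib]
    rw [hf, hv]; exact h
  have hVfun : V = fun s => (1/2) * (x s ⬝ᵥ P.mulVec (x s)) := funext hV
  have hVd : HasDerivAt V ((1/2) * (w ⬝ᵥ P.mulVec x0 + x0 ⬝ᵥ P.mulVec w)) t := by
    rw [hVfun]; exact hQ.const_mul (1/2)
  -- algebraic identity
  have key : (1/2) * (w ⬝ᵥ P.mulVec x0 + x0 ⬝ᵥ P.mulVec w)
      = -(ε / 2) * V t
        - (1 / 2) * ((L.mulVec x0 + u0 • J) ⬝ᵥ (L.mulVec x0 + u0 • J))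
        + u0 * y t := by
    have hA : x0 ⬝ᵥ (P * A).mulVec x0 + x0 ⬝ᵥ (Aᵀ * P).mulVec x0
        = -(L.mulVec x0 ⬝ᵥ L.mulVec x0) - (ε/2) * (x0 ⬝ᵥ P.mulVec x0) := by
      have := congrArg (fun M => x0 ⬝ᵥ M.mulVec x0) hKYP1
      simpa [add_mulVec, sub_mulVec, neg_mulVec, dotProduct_add, dotProduct_sub,
        dotProduct_neg, smul_mulVec, dotProduct_smul, smul_eq_mul,
        ← mulVec_mulVec, dotProduct_mulVec, vecMul_transpose] using this
    have hAx : x0 ⬝ᵥ (Aᵀ * P).mulVec x0 = A.mulVec x0 ⬝ᵥ P.mulVec x0 := by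
      rw [← mulVec_mulVec, dotProduct_mulVec, vecMul_transpose]
    have hxA : x0 ⬝ᵥ P.mulVec (A.mulVec x0) = x0 ⬝ᵥ (P * A).mulVec x0 := by
      rw [mulVec_mulVec]
    have hB1 : x0 ⬝ᵥ P.mulVec B = C ⬝ᵥ x0 - L.mulVec x0 ⬝ᵥ J := by
      rw [hKYP2]
      simp [dotProduct_sub, dotProduct_mulVec, vecMul_transpose, dotProduct_comm x0 C]
    have hB2 : B ⬝ᵥ P.mulVec x0 = x0 ⬝ᵥ P.mulVec B := by
      rw [dotProduct_mulVec, ← mulVec_transpose, hPt, dotProduct_comm]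
    rw [hV t, hy t]
    have hc : J ⬝ᵥ L.mulVec x0 = L.mulVec x0 ⬝ᵥ J := dotProduct_comm _ _
    simp only [hw, add_dotProduct, dotProduct_add, smul_dotProduct, dotProduct_smul,
      mulVec_add, mulVec_smul, smul_eq_mul]
    rw [← hAx, hxA, hB2, ← hx0, ← hu0]
    linear_combination (1/2) * hA + u0 * hB1 + (u0/2) * hc + (u0^2/2) * hKYP3
  rw [← key]; exact hVd
end

section
/- Let A ∈ ℝ^{m×m}, B ∈ ℝ^{m×1}, C ∈ ℝ^{1×m}, ε > 0, M > 0. Suppose P is an m×m symmetric positive definite matrix and L ∈ ℝ^{p×m} satisfy PA + AᵀP = −LᵀL − (ε/2)P and PB = Cᵀ. Let n : ℝ × ℝ → ℝ be continuous and satisfy n(t, y)·y > −M for all t and y. Let x : [0, ∞) → ℝ^m be differentiable with x'(t) = A x(t) − B n(t, C x(t)) for all t ≥ 0. Then for every η > 0 there exists t_η ≥ 0 such that (1/2) x(t_η)ᵀ P x(t_η) ≤ 2M/ε + η. -/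
open Matrix

/-- Lemma 1 (finite-time entry part) for a Lur'e system `x' = A x - B n(t, Cx)`
with strictly proper linear block: under the ε-KYP conditions
`PA + AᵀP = -LᵀL - (ε/2)P`, `PB = Cᵀ` and the bound `n(t,y)·y > -M`,
the state enters `{x : (1/2) xᵀPx ≤ 2M/ε + η}` in finite time. -/
theorem lure_finite_time_entry {m p : ℕ}
    (A : Matrix (Fin m) (Fin m) ℝ) (B : Fin m → ℝ) (C : Fin m → ℝ)
    (ε M : ℝ) (hε : 0 < ε) (hM : 0 < M)
    (P : Matrix (Fin m) (Fin m) ℝ) (hP : P.PosDef)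
    (L : Matrix (Fin p) (Fin m) ℝ)
    (hKYP1 : P * A + Aᵀ * P = -(Lᵀ * L) - (ε / 2) • P)
    (hKYP2 : P.mulVec B = C)
    (n : ℝ → ℝ → ℝ) (hn : Continuous fun q : ℝ × ℝ => n q.1 q.2)
    (hsector : ∀ t y, -M < n t y * y)
    (x : ℝ → Fin m → ℝ)
    (hx : ∀ t, 0 ≤ t → HasDerivAt x (A.mulVec (x t) - n t (C ⬝ᵥ x t) • B) t) :
    ∀ η > (0 : ℝ), ∃ tη, 0 ≤ tη ∧
      (1 / 2) * (x tη ⬝ᵥ P.mulVec (x tη)) ≤ 2 * M / ε + η := by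
  intro η hη
  by_contra hcon
  push_neg at hcon
  -- hcon : ∀ tη, 0 ≤ tη → 2 * M / ε + η < (1/2) * (x tη ⬝ᵥ P.mulVec (x tη))
  have hPt : Pᵀ = P := hP.isHermitian.eq
  have hsymm : ∀ a b : Fin m → ℝ, a ⬝ᵥ P.mulVec b = b ⬝ᵥ P.mulVec a := by
    intro a b
    rw [Matrix.dotProduct_mulVec, ← Matrix.mulVec_transpose, hPt, dotProduct_comm]
  have hMsymm : ∀ (N : Matrix (Fin m) (Fin m) ℝ) (a : Fin m → ℝ),
      a ⬝ᵥ N.mulVec a = a ⬝ᵥ Nᵀ.mulVec a := by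
    intro N a
    rw [Matrix.dotProduct_mulVec, ← Matrix.mulVec_transpose, dotProduct_comm]
  set V : ℝ → ℝ := fun s => (1/2) * (x s ⬝ᵥ P.mulVec (x s)) with hVdef
  set d : ℝ → ℝ := fun s =>
    x s ⬝ᵥ P.mulVec (A.mulVec (x s) - n s (C ⬝ᵥ x s) • B) with hddef
  -- derivative of V
  have hV : ∀ t, 0 ≤ t → HasDerivAt V (d t) t := by
    intro t ht
    set v : Fin m → ℝ := A.mulVec (x t) - n t (C ⬝ᵥ x t) • B with hv
    have hxi : ∀ i, HasDerivAt (fun s => x s i) (v i) t :=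
      hasDerivAt_pi.mp (hx t ht)
    have h1 : HasDerivAt (fun s => ∑ i, ∑ j, x s i * (P i j * x s j))
        (∑ i, ∑ j, (v i * (P i j * x t j) + x t i * (P i j * v j))) t := by
      apply HasDerivAt.fun_sum
      intro i _
      apply HasDerivAt.fun_sum
      intro j _
      exact (hxi i).mul ((hxi j).const_mul (P i j))
    have h2 : HasDerivAt (fun s => x s ⬝ᵥ P.mulVec (x s))
        (v ⬝ᵥ P.mulVec (x t) + x t ⬝ᵥ P.mulVec v) t := by
      have e1 : (fun s => ∑ i, ∑ j, x s i * (P i j * x s j))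
          = fun s => x s ⬝ᵥ P.mulVec (x s) := by
        funext s
        simp [dotProduct, Matrix.mulVec, Finset.mul_sum]
      have e2 : (∑ i, ∑ j, (v i * (P i j * x t j) + x t i * (P i j * v j)))
          = v ⬝ᵥ P.mulVec (x t) + x t ⬝ᵥ P.mulVec v := by
        simp [dotProduct, Matrix.mulVec, Finset.mul_sum,
          Finset.sum_add_distrib]
      rw [← e1, ← e2]
      exact h1
    have h3 : v ⬝ᵥ P.mulVec (x t) + x t ⬝ᵥ P.mulVec v = 2 * d t := by
      rw [hsymm v (x t)]
      simp [hddef, hv]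
      ring
    have h4 := h2.const_mul (1/2 : ℝ)
    rw [h3] at h4
    have : (1/2 : ℝ) * (2 * d t) = d t := by ring
    rw [this] at h4
    exact h4
  -- bound on the derivative
  have hd : ∀ t, 0 ≤ t → d t ≤ -(ε * η / 2) := by
    intro t ht
    set u : Fin m → ℝ := x t with hu
    set nt : ℝ := n t (C ⬝ᵥ u) with hnt
    have hdval : d t = u ⬝ᵥ (P * A).mulVec u - nt * (C ⬝ᵥ u) := by
      simp only [hddef, Matrix.mulVec_sub, Matrix.mulVec_smul,
        dotProduct_sub, dotProduct_smul, Matrix.mulVec_mulVec]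
      rw [hKYP2]
      rw [dotProduct_comm u C]
      simp [smul_eq_mul]
      rfl
    have hPAsymm : u ⬝ᵥ (Aᵀ * P).mulVec u = u ⬝ᵥ (P * A).mulVec u := by
      rw [hMsymm (Aᵀ * P) u, Matrix.transpose_mul, Matrix.transpose_transpose, hPt]
    have hsum : u ⬝ᵥ (P * A).mulVec u
        = (1/2) * (u ⬝ᵥ ((P * A + Aᵀ * P).mulVec u)) := by
      rw [Matrix.add_mulVec, dotProduct_add, hPAsymm]
      ring
    have hLnn : 0 ≤ u ⬝ᵥ (Lᵀ * L).mulVec u := by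
      rw [← Matrix.mulVec_mulVec, Matrix.dotProduct_mulVec,
        ← Matrix.mulVec_transpose, Matrix.transpose_transpose]
      exact Finset.sum_nonneg fun i _ => mul_self_nonneg _
    have hq : u ⬝ᵥ (P * A).mulVec u
        ≤ -(ε/4) * (u ⬝ᵥ P.mulVec u) := by
      rw [hsum, hKYP1]
      have : ((-(Lᵀ * L) - (ε / 2) • P).mulVec u)
          = -((Lᵀ * L).mulVec u) - (ε/2) • (P.mulVec u) := by
        rw [Matrix.sub_mulVec, Matrix.neg_mulVec, Matrix.smul_mulVec]
      rw [this, dotProduct_sub, dotProduct_neg, dotProduct_smul]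
      simp only [smul_eq_mul]
      nlinarith [hLnn]
    have hsec : -(nt * (C ⬝ᵥ u)) < M := by
      have := hsector t (C ⬝ᵥ u)
      linarith
    have hV' : 2 * M / ε + η < (1/2) * (u ⬝ᵥ P.mulVec u) := hcon t ht
    have hεM : (ε/2) * (2 * M / ε) = M := by field_simp
    nlinarith [hq, hsec, hV', mul_lt_mul_of_pos_left hV' (by linarith : (0:ℝ) < ε/2)]
  -- monotonicity of W = V + (εη/2) t
  set K : ℝ := ε * η / 2 with hK
  have hKpos : 0 < K := by positivity
  set W : ℝ → ℝ := fun s => V s + K * s with hW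
  have hWderiv : ∀ t, 0 ≤ t → HasDerivAt W (d t + K) t := by
    intro t ht
    have h1 : HasDerivAt (fun s : ℝ => K * s) (K * 1) t :=
      (hasDerivAt_id t).const_mul K
    have h2 := (hV t ht).add h1
    simp only [mul_one] at h2
    exact h2
  have hanti : AntitoneOn W (Set.Ici (0:ℝ)) := by
    apply antitoneOn_of_deriv_nonpos (convex_Ici 0)
    · intro t ht
      exact ((hWderiv t ht).continuousAt).continuousWithinAt
    · intro t ht
      rw [interior_Ici] at ht
      exact ((hWderiv t (le_of_lt ht)).differentiableAt).differentiableWithinAt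
    · intro t ht
      rw [interior_Ici] at ht
      rw [(hWderiv t (le_of_lt ht)).deriv]
      have := hd t (le_of_lt ht)
      linarith
  -- get contradiction
  have hV0pos : 0 < V 0 := by
    have := hcon 0 le_rfl
    have hMε : 0 < 2 * M / ε := by positivity
    simp only [hVdef]
    linarith
  set t0 : ℝ := V 0 / K with ht0
  have ht0nn : 0 ≤ t0 := le_of_lt (by positivity)
  have hWle : W t0 ≤ W 0 := hanti (Set.mem_Ici.mpr le_rfl) (Set.mem_Ici.mpr ht0nn) ht0nn
  have hKt0 : K * t0 = V 0 := by
    rw [ht0]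
    field_simp
  have hVt0 : V t0 ≤ 0 := by
    have : V t0 + K * t0 ≤ V 0 + K * 0 := hWle
    rw [hKt0] at this
    linarith
  have hVt0pos : 0 < V t0 := by
    have := hcon t0 ht0nn
    have hMε : 0 < 2 * M / ε := by positivity
    simp only [hVdef]
    linarith
  linarith
end

section
/- Let A ∈ ℝ^{m×m}, B ∈ ℝ^{m×1}, C ∈ ℝ^{1×m}, ε > 0, M > 0. Suppose P is an m×m symmetric positive definite matrix and L ∈ ℝ^{p×m} satisfy PA + AᵀP = −LᵀL − (ε/2)P and PB = Cᵀ. Let n : ℝ × ℝ → ℝ be continuous and satisfy n(t, y)·y > −M for all t and y. Let x : [0, ∞) → ℝ^m be differentiable with x'(t) = A x(t) − B n(t, C x(t)) for all t ≥ 0, and let η > 0. If (1/2) x(t₀)ᵀ P x(t₀) ≤ 2M/ε + η for some t₀ ≥ 0, then (1/2) x(t)ᵀ P x(t) ≤ 2M/ε + η for all t ≥ t₀. -/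
open Matrix Set

/-- derivative of the quadratic form along a differentiable curve -/
lemma quad_hasDerivAt {m : ℕ} (P : Matrix (Fin m) (Fin m) ℝ)
    {x : ℝ → Fin m → ℝ} {d : Fin m → ℝ} {t : ℝ} (hx : HasDerivAt x d t) :
    HasDerivAt (fun s => x s ⬝ᵥ P.mulVec (x s))
      (d ⬝ᵥ P.mulVec (x t) + x t ⬝ᵥ P.mulVec d) t := by
  have hxi : ∀ i, HasDerivAt (fun s => x s i) (d i) t := (hasDerivAt_pi.mp hx)
  have h : HasDerivAt (fun s => ∑ i, x s i * ∑ j, P i j * x s j)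
      (∑ i, (d i * (∑ j, P i j * x t j) + x t i * (∑ j, P i j * d j))) t := by
    apply HasDerivAt.fun_sum
    intro i _
    exact (hxi i).mul (HasDerivAt.fun_sum fun j _ => (hxi j).const_mul (P i j))
  have heq : (fun s => x s ⬝ᵥ P.mulVec (x s))
      = fun s => ∑ i, x s i * ∑ j, P i j * x s j := by
    funext s; simp [dotProduct, mulVec]
  rw [heq]
  convert h using 1
  simp [dotProduct, mulVec, Finset.sum_add_distrib]

/-- general invariance lemma via MVT -/
lemma invariance_of_deriv_neg {V v : ℝ → ℝ} {t₀ c : ℝ}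
    (hV : ∀ t, t₀ ≤ t → HasDerivAt V (v t) t)
    (hneg : ∀ t, t₀ ≤ t → c ≤ V t → v t < 0)
    (h0 : V t₀ ≤ c) : ∀ t, t₀ ≤ t → V t ≤ c := by
  intro t₁ ht₁
  by_contra hgt
  push_neg at hgt
  have hcont : ContinuousOn V (Icc t₀ t₁) := fun s hs =>
    ((hV s hs.1).continuousAt).continuousWithinAt
  set S : Set ℝ := Icc t₀ t₁ ∩ V ⁻¹' (Iic c) with hS
  have hSclosed : IsClosed S :=
    hcont.preimage_isClosed_of_isClosed isClosed_Icc isClosed_Iic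
  have hSne : S.Nonempty := ⟨t₀, ⟨le_refl _, ht₁⟩, h0⟩
  have hSbdd : BddAbove S := ⟨t₁, fun s hs => hs.1.2⟩
  obtain ⟨s, hs_def⟩ : ∃ s, s = sSup S := ⟨_, rfl⟩
  have hsS : s ∈ S := hs_def ▸ hSclosed.csSup_mem hSne hSbdd
  have hst₀ : t₀ ≤ s := hsS.1.1
  have hst₁ : s ≤ t₁ := hsS.1.2
  have hVs : V s ≤ c := hsS.2
  have hslt : s < t₁ := lt_of_le_of_ne hst₁ (by rintro rfl; exact absurd hVs (not_le.mpr hgt))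
  have hbig : ∀ u, s < u → u ≤ t₁ → c < V u := by
    intro u hsu hut₁
    by_contra h
    push_neg at h
    have : u ∈ S := ⟨⟨hst₀.trans hsu.le, hut₁⟩, h⟩
    exact absurd (hs_def ▸ le_csSup hSbdd this) (not_le.mpr hsu)
  obtain ⟨ξ, hξ, hslope⟩ := exists_hasDerivAt_eq_slope V v hslt
    (hcont.mono (Icc_subset_Icc hst₀ le_rfl))
    (fun u hu => hV u (hst₀.trans hu.1.le))
  have hVξ : c < V ξ := hbig ξ hξ.1 hξ.2.le
  have hneg' : v ξ < 0 := hneg ξ (hst₀.trans hξ.1.le) hVξ.le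
  have hVt₁ : c < V t₁ := hgt
  have : 0 < v ξ := by
    rw [hslope]
    apply div_pos _ (sub_pos.mpr hslt)
    linarith
  linarith

/-- Lemma 1 (positive invariance part) for a Lur'e system `x' = A x - B n(t, Cx)`
with strictly proper linear block: under the ε-KYP conditions
`PA + AᵀP = -LᵀL - (ε/2)P`, `PB = Cᵀ` and the bound `n(t,y)·y > -M`,
the region `{x : (1/2) xᵀPx ≤ 2M/ε + η}` is positively invariant along the
trajectory. -/
theorem lure_positive_invariance {m p : ℕ}
    (A : Matrix (Fin m) (Fin m) ℝ) (B : Fin m → ℝ) (C : Fin m → ℝ)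
    (ε M : ℝ) (hε : 0 < ε) (hM : 0 < M)
    (P : Matrix (Fin m) (Fin m) ℝ) (hP : P.PosDef)
    (L : Matrix (Fin p) (Fin m) ℝ)
    (hKYP1 : P * A + Aᵀ * P = -(Lᵀ * L) - (ε / 2) • P)
    (hKYP2 : P.mulVec B = C)
    (n : ℝ → ℝ → ℝ) (hn : Continuous fun q : ℝ × ℝ => n q.1 q.2)
    (hsector : ∀ t y, -M < n t y * y)
    (x : ℝ → Fin m → ℝ)
    (hx : ∀ t, 0 ≤ t → HasDerivAt x (A.mulVec (x t) - n t (C ⬝ᵥ x t) • B) t)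
    (η : ℝ) (hη : 0 < η)
    (t₀ : ℝ) (ht₀ : 0 ≤ t₀)
    (hV₀ : (1 / 2) * (x t₀ ⬝ᵥ P.mulVec (x t₀)) ≤ 2 * M / ε + η) :
    ∀ t, t₀ ≤ t → (1 / 2) * (x t ⬝ᵥ P.mulVec (x t)) ≤ 2 * M / ε + η := by
  have hPsymm : Pᵀ = P := hP.1
  have hPsw : ∀ u w : Fin m → ℝ, u ⬝ᵥ P.mulVec w = w ⬝ᵥ P.mulVec u := by
    intro u w
    rw [dotProduct_mulVec, ← mulVec_transpose, hPsymm, dotProduct_comm]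
  have hεc : ε * (2 * M / ε + η) = 2 * M + ε * η := by
    field_simp
  have hVd : ∀ t, t₀ ≤ t →
      HasDerivAt (fun t => (1 / 2) * (x t ⬝ᵥ P.mulVec (x t)))
        (x t ⬝ᵥ P.mulVec (A.mulVec (x t) - n t (C ⬝ᵥ x t) • B)) t := by
    intro t ht
    have h := (quad_hasDerivAt P (hx t (ht₀.trans ht))).const_mul ((1:ℝ) / 2)
    refine h.congr_deriv ?_
    rw [hPsw (A.mulVec (x t) - n t (C ⬝ᵥ x t) • B) (x t)]
    ring
  have hneg : ∀ t, t₀ ≤ t → 2 * M / ε + η ≤ (1 / 2) * (x t ⬝ᵥ P.mulVec (x t)) →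
      x t ⬝ᵥ P.mulVec (A.mulVec (x t) - n t (C ⬝ᵥ x t) • B) < 0 := by
    intro t ht hVt
    have h2 : x t ⬝ᵥ P.mulVec (A.mulVec (x t))
        = (1 / 2) * (-(L.mulVec (x t) ⬝ᵥ L.mulVec (x t))
            - (ε / 2) * (x t ⬝ᵥ P.mulVec (x t))) := by
      have hq := congrArg (fun Q : Matrix (Fin m) (Fin m) ℝ => x t ⬝ᵥ Q.mulVec (x t)) hKYP1
      simp only [add_mulVec, sub_mulVec, neg_mulVec, smul_mulVec,
        dotProduct_add, dotProduct_sub, dotProduct_neg, dotProduct_smul,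
        ← mulVec_mulVec] at hq
      have hAt : x t ⬝ᵥ Aᵀ.mulVec (P.mulVec (x t))
          = x t ⬝ᵥ P.mulVec (A.mulVec (x t)) := by
        rw [dotProduct_mulVec, ← mulVec_transpose, transpose_transpose,
          hPsw (x t) (A.mulVec (x t)), dotProduct_mulVec, ← mulVec_transpose, hPsymm]
      have hLt : x t ⬝ᵥ Lᵀ.mulVec (L.mulVec (x t))
          = L.mulVec (x t) ⬝ᵥ L.mulVec (x t) := by
        rw [dotProduct_mulVec, ← mulVec_transpose, transpose_transpose]
      rw [hAt, hLt] at hq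
      simp only [smul_eq_mul] at hq
      linarith
    have hvt : x t ⬝ᵥ P.mulVec (A.mulVec (x t) - n t (C ⬝ᵥ x t) • B)
        = (1 / 2) * (-(L.mulVec (x t) ⬝ᵥ L.mulVec (x t))
            - (ε / 2) * (x t ⬝ᵥ P.mulVec (x t)))
          - n t (C ⬝ᵥ x t) * (C ⬝ᵥ x t) := by
      rw [mulVec_sub, mulVec_smul, dotProduct_sub, dotProduct_smul, hKYP2,
        h2, dotProduct_comm (x t) C, smul_eq_mul]
    have hL0 : 0 ≤ L.mulVec (x t) ⬝ᵥ L.mulVec (x t) := by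
      simp only [dotProduct]
      exact Finset.sum_nonneg fun i _ => mul_self_nonneg _
    have hsec := hsector t (C ⬝ᵥ x t)
    have hQ : 2 * (2 * M / ε + η) ≤ x t ⬝ᵥ P.mulVec (x t) := by linarith
    rw [hvt]
    nlinarith [mul_le_mul_of_nonneg_left hQ (by positivity : (0:ℝ) ≤ ε / 4)]
  exact invariance_of_deriv_neg hVd hneg hV₀
end

section
/- Let A ∈ ℝ^{m×m}, B ∈ ℝ^{m×1}, C ∈ ℝ^{1×m}, and let α < β be real scalars, ε > 0, M > 0. Suppose the matrices (P, L, J), with P symmetric positive definite, L ∈ ℝ^{p×m}, J ∈ ℝ^p, satisfy the ε-KYP conditions for the shifted realization (A − αBC, B, C, 1/(β−α)): P(A − αBC) + (A − αBC)ᵀP = −LᵀL − (ε/2)P, PB = Cᵀ − LᵀJ, JᵀJ = 2/(β−α). Let n : ℝ × ℝ → ℝ be continuous and satisfy the hyperbolic sector condition (1/(β−α))·(n(t,y) − αy)·(βy − n(t,y)) > −M for all t and y. Let x : [0, ∞) → ℝ^m be differentiable with x'(t) = A x(t) − B n(t, C x(t)) for all t ≥ 0. Then for every η > 0 there exists t_η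 ≥ 0 such that (1/2) x(t)ᵀ P x(t) ≤ 2M/ε + η for all t ≥ t_η. -/
open Matrix

section Aux

variable {m p : ℕ}

private lemma aux_proj_deriv {x : ℝ → Fin m → ℝ} {x' : Fin m → ℝ} {t : ℝ}
    (hx : HasDerivAt x x' t) (i : Fin m) :
    HasDerivAt (fun s => x s i) (x' i) t := by
  have := (ContinuousLinearMap.proj (R := ℝ) (φ := fun _ : Fin m => ℝ) i).hasFDerivAt.comp_hasDerivAt
    t hx
  exact this

private lemma aux_quad_deriv (P : Matrix (Fin m) (Fin m) ℝ) {x : ℝ → Fin m → ℝ}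
    {x' : Fin m → ℝ} {t : ℝ} (hx : HasDerivAt x x' t) :
    HasDerivAt (fun s => x s ⬝ᵥ P.mulVec (x s))
      (x' ⬝ᵥ P.mulVec (x t) + x t ⬝ᵥ P.mulVec x') t := by
  have hc := fun i => aux_proj_deriv hx i
  have h : HasDerivAt (fun s => ∑ i, ∑ j, x s i * (P i j * x s j))
      (∑ i, ∑ j, (x' i * (P i j * x t j) + x t i * (P i j * x' j))) t := by
    refine HasDerivAt.fun_sum fun i _ => HasDerivAt.fun_sum fun j _ => ?_
    exact (hc i).mul ((hc j).const_mul (P i j))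
  convert h using 1
  · funext s
    simp [dotProduct, Matrix.mulVec, Finset.mul_sum]
  · simp only [Finset.sum_add_distrib]
    congr 1 <;> simp [dotProduct, Matrix.mulVec, Finset.mul_sum]

private lemma aux_dot_symm {P : Matrix (Fin m) (Fin m) ℝ} (hPs : Pᵀ = P)
    (v w : Fin m → ℝ) : v ⬝ᵥ P.mulVec w = w ⬝ᵥ P.mulVec v := by
  rw [dotProduct_mulVec, ← Matrix.mulVec_transpose, hPs, dotProduct_comm]

private lemma aux_dot_mul {k : ℕ} (Q : Matrix (Fin m) (Fin k) ℝ)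
    (R : Matrix (Fin k) (Fin m) ℝ) (v : Fin m → ℝ) :
    v ⬝ᵥ (Q * R).mulVec v = (Qᵀ.mulVec v) ⬝ᵥ R.mulVec v := by
  rw [← Matrix.mulVec_mulVec, dotProduct_mulVec, ← Matrix.mulVec_transpose]

private lemma aux_vecMulVec (B C v : Fin m → ℝ) :
    (vecMulVec B C).mulVec v = (C ⬝ᵥ v) • B := by
  funext i
  simp [vecMulVec, Matrix.mulVec, dotProduct, Finset.mul_sum, Finset.sum_mul, mul_comm,
    mul_left_comm]

end Aux

/-- Theorem 1 (Weak Circle Criterion), state-space form for a strictly proper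
linear block: if `(P, L, J)` satisfy the ε-KYP conditions for the shifted
realization `(A - αBC, B, C, 1/(β-α))` and the nonlinearity satisfies the
hyperbolic sector condition
`(1/(β-α))·(n(t,y) - αy)·(βy - n(t,y)) > -M`, then for every `η > 0` the state
of the Lur'e system `x' = A x - B n(t, Cx)` reaches the region
`{x : (1/2) xᵀPx ≤ 2M/ε + η}` in finite time without leaving it anymore. -/
theorem weak_circle_criterion {m p : ℕ}
    (A : Matrix (Fin m) (Fin m) ℝ) (B : Fin m → ℝ) (C : Fin m → ℝ)
    (α β ε M : ℝ) (hαβ : α < β) (hε : 0 < ε) (hM : 0 < M)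
    (P : Matrix (Fin m) (Fin m) ℝ) (hP : P.PosDef)
    (L : Matrix (Fin p) (Fin m) ℝ) (J : Fin p → ℝ)
    (hKYP1 : P * (A - α • vecMulVec B C) + (A - α • vecMulVec B C)ᵀ * P
                = -(Lᵀ * L) - (ε / 2) • P)
    (hKYP2 : P.mulVec B = C - Lᵀ.mulVec J)
    (hKYP3 : J ⬝ᵥ J = 2 / (β - α))
    (n : ℝ → ℝ → ℝ) (hn : Continuous fun q : ℝ × ℝ => n q.1 q.2)
    (hsector : ∀ t y, -M < (1 / (β - α)) * (n t y - α * y) * (β * y - n t y))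
    (x : ℝ → Fin m → ℝ)
    (hx : ∀ t, 0 ≤ t → HasDerivAt x (A.mulVec (x t) - n t (C ⬝ᵥ x t) • B) t) :
    ∀ η > (0 : ℝ), ∃ tη, 0 ≤ tη ∧
      ∀ t, tη ≤ t → (1 / 2) * (x t ⬝ᵥ P.mulVec (x t)) ≤ 2 * M / ε + η := by
  intro η hη
  have hβα : (0:ℝ) < β - α := sub_pos.mpr hαβ
  have hPs : Pᵀ = P := by
    have := hP.1
    rwa [Matrix.IsHermitian, conjTranspose_eq_transpose_of_trivial] at this
  set Ah : Matrix (Fin m) (Fin m) ℝ := A - α • vecMulVec B C with hAh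
  set g : ℝ → ℝ := fun t => (1/2) * (x t ⬝ᵥ P.mulVec (x t)) with hg
  -- derivative of g
  have hgderiv : ∀ t, 0 ≤ t →
      HasDerivAt g ((A.mulVec (x t) - n t (C ⬝ᵥ x t) • B) ⬝ᵥ P.mulVec (x t)) t := by
    intro t ht
    have h1 := aux_quad_deriv P (hx t ht)
    set d : Fin m → ℝ := A.mulVec (x t) - n t (C ⬝ᵥ x t) • B with hd
    have h2 : d ⬝ᵥ P.mulVec (x t) + x t ⬝ᵥ P.mulVec d = 2 * (d ⬝ᵥ P.mulVec (x t)) := by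
      rw [aux_dot_symm hPs (x t) d]; ring
    have h3 := h1.const_mul (1/2 : ℝ)
    rw [h2] at h3
    convert h3 using 1
    · rfl
    · rfl
    ring
  -- the differential inequality
  have hbound : ∀ t, 0 ≤ t →
      (A.mulVec (x t) - n t (C ⬝ᵥ x t) • B) ⬝ᵥ P.mulVec (x t) ≤ -(ε/2) * g t + M := by
    intro t ht
    set v : Fin m → ℝ := x t with hv
    set y : ℝ := C ⬝ᵥ v with hy
    set u : ℝ := n t y with hu
    set nh : ℝ := u - α * y with hnh
    have hfield : A.mulVec v - u • B = Ah.mulVec v - nh • B := by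
      rw [hAh, Matrix.sub_mulVec, Matrix.smul_mulVec, aux_vecMulVec]
      funext i
      simp only [Pi.sub_apply, Pi.smul_apply, smul_eq_mul, hnh, hy]
      ring
    set w : Fin p → ℝ := L.mulVec v with hw
    -- quadratic part via KYP1
    have hq : (Ah.mulVec v) ⬝ᵥ P.mulVec v
        = (1/2) * (-(w ⬝ᵥ w) - (ε/2) * (v ⬝ᵥ P.mulVec v)) := by
      have e1 : v ⬝ᵥ ((P * Ah).mulVec v) = (Ah.mulVec v) ⬝ᵥ P.mulVec v := by
        rw [← Matrix.mulVec_mulVec, aux_dot_symm hPs]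
      have e2 : v ⬝ᵥ ((Ahᵀ * P).mulVec v) = (Ah.mulVec v) ⬝ᵥ P.mulVec v := by
        rw [aux_dot_mul, transpose_transpose]
      have e3 : v ⬝ᵥ ((Lᵀ * L).mulVec v) = w ⬝ᵥ w := by
        rw [aux_dot_mul, transpose_transpose, hw]
      have esum : v ⬝ᵥ ((P * Ah + Ahᵀ * P).mulVec v) = 2 * ((Ah.mulVec v) ⬝ᵥ P.mulVec v) := by
        rw [Matrix.add_mulVec, dotProduct_add, e1, e2]; ring
      rw [hKYP1] at esum
      rw [Matrix.sub_mulVec, Matrix.neg_mulVec, dotProduct_sub, dotProduct_neg, e3,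
        Matrix.smul_mulVec, dotProduct_smul, smul_eq_mul] at esum
      linarith
    -- PB part via KYP2
    have hPB : B ⬝ᵥ P.mulVec v = y - w ⬝ᵥ J := by
      have h1 : B ⬝ᵥ P.mulVec v = v ⬝ᵥ P.mulVec B := aux_dot_symm hPs B v
      rw [h1, hKYP2, dotProduct_sub, dotProduct_mulVec, Matrix.vecMul_transpose,
        dotProduct_comm v C, hy, hw]
    -- completion of the square
    have hsq : (0:ℝ) ≤ (w - nh • J) ⬝ᵥ (w - nh • J) := by
      have h1 : (w - nh • J) ⬝ᵥ (w - nh • J) = ∑ i, (w i - nh * J i)^2 := by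
        simp [dotProduct, sq]
      rw [h1]
      exact Finset.sum_nonneg fun i _ => sq_nonneg _
    have hsqexp : (w - nh • J) ⬝ᵥ (w - nh • J)
        = w ⬝ᵥ w - 2 * nh * (w ⬝ᵥ J) + nh^2 * (2/(β-α)) := by
      have hcomm : J ⬝ᵥ w = w ⬝ᵥ J := dotProduct_comm _ _
      rw [← hKYP3]
      simp only [sub_dotProduct, dotProduct_sub, smul_dotProduct, dotProduct_smul,
        smul_eq_mul, hcomm]
      ring
    -- sector bound
    have hsec : nh^2 / (β - α) - nh * y < M := by
      have h1 := hsector t y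
      have h2 : (1 / (β - α)) * (n t y - α * y) * (β * y - n t y)
          = nh * y - nh^2 / (β - α) := by
        rw [hnh, hu]
        field_simp
        ring
      rw [h2] at h1
      linarith
    -- put everything together
    have hfin : (A.mulVec v - u • B) ⬝ᵥ P.mulVec v
        = -(1/2) * ((w - nh • J) ⬝ᵥ (w - nh • J)) - (ε/4) * (v ⬝ᵥ P.mulVec v)
          + (nh^2/(β-α) - nh * y) := by
      rw [hfield, sub_dotProduct, smul_dotProduct, smul_eq_mul, hq, hPB, hsqexp]
      field_simp
      ring
    have hgt : g t = (1/2) * (v ⬝ᵥ P.mulVec v) := rfl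
    rw [hfin, hgt]
    nlinarith [hsq, hsec]
  -- Lyapunov / Gronwall argument
  set c : ℝ := 2 * M / ε with hc
  set F : ℝ → ℝ := fun t => (g t - c) * Real.exp (ε/2 * t) with hF
  have hFderiv : ∀ t, 0 ≤ t → HasDerivAt F
      (((A.mulVec (x t) - n t (C ⬝ᵥ x t) • B) ⬝ᵥ P.mulVec (x t) + (ε/2) * (g t - c))
        * Real.exp (ε/2 * t)) t := by
    intro t ht
    have h1 := (hgderiv t ht).sub_const c
    have h2 : HasDerivAt (fun s => Real.exp (ε/2 * s)) ((ε/2) * Real.exp (ε/2 * t)) t := by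
      have := ((hasDerivAt_id t).const_mul (ε/2)).exp
      simpa [mul_comm] using this
    have h3 := h1.mul h2
    convert h3 using 1
    · rfl
    · rfl
    · rfl
    ring
  have hFanti : AntitoneOn F (Set.Ici (0:ℝ)) := by
    apply antitoneOn_of_deriv_nonpos (convex_Ici 0)
    · intro t ht
      exact ((hFderiv t ht).continuousAt).continuousWithinAt
    · intro t ht
      rw [interior_Ici] at ht
      exact (hFderiv t (le_of_lt ht)).differentiableAt.differentiableWithinAt
    · intro t ht
      rw [interior_Ici] at ht
      rw [(hFderiv t (le_of_lt ht)).deriv]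
      have hb := hbound t (le_of_lt ht)
      have hcε : (ε/2) * c = M := by
        rw [hc]; field_simp
      have hnp : (A.mulVec (x t) - n t (C ⬝ᵥ x t) • B) ⬝ᵥ P.mulVec (x t)
          + (ε/2) * (g t - c) ≤ 0 := by
        have he : (ε/2) * (g t - c) = (ε/2) * g t - M := by rw [mul_sub, hcε]
        linarith
      exact mul_nonpos_of_nonpos_of_nonneg hnp (Real.exp_pos _).le
  -- decay estimate
  have hdecay : ∀ t, 0 ≤ t → g t ≤ c + (g 0 - c) * Real.exp (-(ε/2) * t) := by
    intro t ht
    have hFt : F t ≤ F 0 := hFanti Set.self_mem_Ici ht ht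
    have hF0 : F 0 = g 0 - c := by simp [hF]
    have hE : (0:ℝ) < Real.exp (ε/2 * t) := Real.exp_pos _
    have h2 : g t - c ≤ (g 0 - c) * Real.exp (-(ε/2) * t) := by
      have hinv : Real.exp (-(ε/2) * t) = (Real.exp (ε/2 * t))⁻¹ := by
        rw [← Real.exp_neg]; ring_nf
      rw [hinv, ← div_eq_mul_inv, le_div_iff₀ hE]
      calc (g t - c) * Real.exp (ε/2 * t) = F t := rfl
        _ ≤ F 0 := hFt
        _ = g 0 - c := hF0
    linarith
  -- choose tη
  have htend : Filter.Tendsto (fun t : ℝ => (g 0 - c) * Real.exp (-(ε/2) * t))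
      Filter.atTop (nhds 0) := by
    have h1 : Filter.Tendsto (fun t : ℝ => ε/2 * t) Filter.atTop Filter.atTop :=
      Filter.Tendsto.const_mul_atTop (by positivity) Filter.tendsto_id
    have h2 : Filter.Tendsto (fun t : ℝ => -(ε/2) * t) Filter.atTop Filter.atBot := by
      have := Filter.tendsto_neg_atTop_atBot.comp h1
      simpa [Function.comp_def, neg_mul] using this
    have h3 : Filter.Tendsto (fun t : ℝ => Real.exp (-(ε/2) * t)) Filter.atTop (nhds 0) := by
      have := Real.tendsto_exp_atBot.comp h2
      simpa [Function.comp_def] using this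
    simpa using h3.const_mul (g 0 - c)
  have hev : ∀ᶠ t in Filter.atTop, (g 0 - c) * Real.exp (-(ε/2) * t) ≤ η :=
    htend.eventually (eventually_le_nhds hη)
  obtain ⟨a, ha⟩ := Filter.eventually_atTop.mp hev
  refine ⟨max a 0, le_max_right _ _, fun t htt => ?_⟩
  have ht0 : 0 ≤ t := le_trans (le_max_right a 0) htt
  have hta : a ≤ t := le_trans (le_max_left a 0) htt
  calc (1 / 2) * (x t ⬝ᵥ P.mulVec (x t)) = g t := rfl
    _ ≤ c + (g 0 - c) * Real.exp (-(ε/2) * t) := hdecay t ht0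
    _ ≤ c + η := by linarith [ha t hta]
    _ = 2 * M / ε + η := rfl
end

section
/- Let A ∈ ℝ^{m×m}, B ∈ ℝ^{m×1}, C ∈ ℝ^{1×m}, and let α < β be real scalars, ε > 0, M > 0. Suppose the matrices (P, L, J), with P symmetric positive definite, L ∈ ℝ^{p×m}, J ∈ ℝ^p, satisfy the ε-KYP conditions for the shifted realization (A − αBC, B, C, 1/(β−α)): P(A − αBC) + (A − αBC)ᵀP = −LᵀL − (ε/2)P, PB = Cᵀ − LᵀJ, JᵀJ = 2/(β−α). Let n : ℝ × ℝ → ℝ be continuous and satisfy (1/(β−α))·(n(t,y) − αy)·(βy − n(t,y)) > −M for all t and y. Let x : [0, ∞) → ℝ^m be differentiable with x'(t) = A x(t) − B n(t, C x(t)) for all t ≥ 0. Set Y = 2√((M/ε) · C P⁻¹ Cᵀ). Then for every η > 0 there exists t_η ≥ 0 such that |C x(t)| < Y + η for all t > t_η. -/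
open Matrix

lemma wc_symm_dot {m : ℕ} {S : Matrix (Fin m) (Fin m) ℝ} (hS : Sᵀ = S)
    (a b : Fin m → ℝ) : S.mulVec a ⬝ᵥ b = a ⬝ᵥ S.mulVec b := by
  conv_lhs => rw [← hS]
  rw [Matrix.mulVec_transpose, ← Matrix.dotProduct_mulVec]

lemma wc_trans_dot {m p : ℕ} (Lm : Matrix (Fin p) (Fin m) ℝ) (a : Fin m → ℝ) (u : Fin p → ℝ) :
    a ⬝ᵥ Lmᵀ.mulVec u = Lm.mulVec a ⬝ᵥ u := by
  rw [Matrix.dotProduct_mulVec, Matrix.vecMul_transpose]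

open scoped MatrixOrder in
lemma wc_cs {m : ℕ} {P : Matrix (Fin m) (Fin m) ℝ} (hP : P.PosDef)
    (C v : Fin m → ℝ) :
    (C ⬝ᵥ v) ^ 2 ≤ (C ⬝ᵥ P⁻¹.mulVec C) * (v ⬝ᵥ P.mulVec v) := by
  set Q := CFC.sqrt P with hQ
  have hQsym : Qᵀ = Q := by
    have := (CFC.sqrt_nonneg P).posSemidef.1
    rwa [Matrix.IsHermitian, Matrix.conjTranspose_eq_transpose_of_trivial] at this
  have hQQ : Q * Q = P := CFC.sqrt_mul_sqrt_self P hP.posSemidef.nonneg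
  set u := P⁻¹.mulVec C with hu
  have hPu : P.mulVec u = C := by
    rw [hu, Matrix.mulVec_mulVec, Matrix.mul_nonsing_inv _ hP.det_pos.ne'.isUnit,
      Matrix.one_mulVec]
  have hCv : C ⬝ᵥ v = Q.mulVec u ⬝ᵥ Q.mulVec v := by
    rw [← hPu, ← hQQ, ← Matrix.mulVec_mulVec, wc_symm_dot hQsym]
  have hS : C ⬝ᵥ u = Q.mulVec u ⬝ᵥ Q.mulVec u := by
    rw [← hPu, ← hQQ, ← Matrix.mulVec_mulVec, wc_symm_dot hQsym]
  have hV : v ⬝ᵥ P.mulVec v = Q.mulVec v ⬝ᵥ Q.mulVec v := by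
    rw [← hQQ, ← Matrix.mulVec_mulVec, ← wc_symm_dot hQsym v]
  have hCu : C ⬝ᵥ P⁻¹.mulVec C = C ⬝ᵥ u := rfl
  rw [hCv, hCu, hS, hV]
  have := Finset.sum_mul_sq_le_sq_mul_sq Finset.univ
    (fun i => Q.mulVec u i) (fun i => Q.mulVec v i)
  simpa [dotProduct, sq] using this


/-- Corollary to the Weak Circle Criterion: under the ε-KYP conditions for the
shifted realization `(A - αBC, B, C, 1/(β-α))` and the hyperbolic sector
condition, the output `y = Cx` of the Lur'e system `x' = A x - B n(t, Cx)` is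
eventually bounded by `Y + η` where `Y = 2√((M/ε) · C P⁻¹ Cᵀ)`. -/
theorem weak_circle_output_bound {m p : ℕ}
    (A : Matrix (Fin m) (Fin m) ℝ) (B : Fin m → ℝ) (C : Fin m → ℝ)
    (α β ε M : ℝ) (hαβ : α < β) (hε : 0 < ε) (hM : 0 < M)
    (P : Matrix (Fin m) (Fin m) ℝ) (hP : P.PosDef)
    (L : Matrix (Fin p) (Fin m) ℝ) (J : Fin p → ℝ)
    (hKYP1 : P * (A - α • vecMulVec B C) + (A - α • vecMulVec B C)ᵀ * P
                = -(Lᵀ * L) - (ε / 2) • P)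
    (hKYP2 : P.mulVec B = C - Lᵀ.mulVec J)
    (hKYP3 : J ⬝ᵥ J = 2 / (β - α))
    (n : ℝ → ℝ → ℝ) (hn : Continuous fun q : ℝ × ℝ => n q.1 q.2)
    (hsector : ∀ t y, -M < (1 / (β - α)) * (n t y - α * y) * (β * y - n t y))
    (x : ℝ → Fin m → ℝ)
    (hx : ∀ t, 0 ≤ t → HasDerivAt x (A.mulVec (x t) - n t (C ⬝ᵥ x t) • B) t)
    (Y : ℝ) (hY : Y = 2 * Real.sqrt ((M / ε) * (C ⬝ᵥ P⁻¹.mulVec C))) :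
    ∀ η > (0 : ℝ), ∃ tη, 0 ≤ tη ∧ ∀ t, tη < t → |C ⬝ᵥ x t| < Y + η := by
  intro η hη
  have hβα : 0 < β - α := sub_pos.2 hαβ
  have hPsymm : Pᵀ = P := hP.1
  set Ah : Matrix (Fin m) (Fin m) ℝ := A - α • vecMulVec B C with hAh
  set V : ℝ → ℝ := fun t => x t ⬝ᵥ P.mulVec (x t) with hVdef
  set d : ℝ → Fin m → ℝ := fun t => A.mulVec (x t) - n t (C ⬝ᵥ x t) • B with hd
  set D : ℝ → ℝ := fun t => d t ⬝ᵥ P.mulVec (x t) + x t ⬝ᵥ P.mulVec (d t) with hDdef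
  -- derivative of V
  have hVderiv : ∀ t, 0 ≤ t → HasDerivAt V (D t) t := by
    intro t ht
    have hxi : ∀ i, HasDerivAt (fun τ => x τ i) (d t i) t := fun i =>
      hasDerivAt_pi.mp (hx t ht) i
    have h1 : HasDerivAt (fun τ => ∑ i, x τ i * ∑ j, P i j * x τ j)
        (∑ i, (d t i * ∑ j, P i j * x t j + x t i * ∑ j, P i j * d t j)) t := by
      apply HasDerivAt.fun_sum
      intro i _
      exact (hxi i).mul (HasDerivAt.fun_sum fun j _ => (hxi j).const_mul (P i j))
    have hVfun : V = fun τ => ∑ i, x τ i * ∑ j, P i j * x τ j := by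
      funext τ; simp [hVdef, dotProduct, mulVec]
    have hDfun : D t = ∑ i, (d t i * ∑ j, P i j * x t j + x t i * ∑ j, P i j * d t j) := by
      simp [hDdef, dotProduct, mulVec, Finset.sum_add_distrib]
    rw [hVfun, hDfun]
    exact h1
  -- pointwise derivative bound
  have hDbound : ∀ t, 0 ≤ t → D t ≤ -(ε/2) * V t + 2*M := by
    intro t ht
    set v : Fin m → ℝ := x t with hv
    set y : ℝ := C ⬝ᵥ v with hy
    set w : ℝ := α * y - n t y with hw
    have hBCv : ∀ u : Fin m → ℝ, (vecMulVec B C).mulVec u = (C ⬝ᵥ u) • B := by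
      intro u; funext i
      simp only [mulVec, vecMulVec_apply, dotProduct, Pi.smul_apply, smul_eq_mul,
        Finset.sum_mul]
      exact Finset.sum_congr rfl fun j _ => by ring
    have hvd : d t = Ah.mulVec v + w • B := by
      rw [hd, hAh, Matrix.sub_mulVec, Matrix.smul_mulVec, hBCv]
      rw [← hy, hw]
      funext i
      simp only [Pi.add_apply, Pi.sub_apply, Pi.smul_apply, smul_eq_mul, smul_smul]
      ring
    have hDeq : D t
        = v ⬝ᵥ ((P * Ah + Ahᵀ * P).mulVec v) + 2 * w * (v ⬝ᵥ P.mulVec B) := by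
      have h2 : Ah.mulVec v ⬝ᵥ P.mulVec v = v ⬝ᵥ (Ahᵀ * P).mulVec v := by
        rw [← Matrix.mulVec_mulVec, wc_trans_dot]
      have h3 : B ⬝ᵥ P.mulVec v = v ⬝ᵥ P.mulVec B := by
        rw [← wc_symm_dot hPsymm B v, dotProduct_comm]
      have e3 : v ⬝ᵥ P.mulVec (Ah.mulVec v) = v ⬝ᵥ (P * Ah).mulVec v := by
        rw [Matrix.mulVec_mulVec]
      rw [hDdef]
      simp only
      rw [hvd]
      rw [add_dotProduct, smul_dotProduct, Matrix.mulVec_add, Matrix.mulVec_smul,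
        dotProduct_add, dotProduct_smul]
      simp only [← hv]
      rw [Matrix.add_mulVec, dotProduct_add, h2, e3, smul_eq_mul, smul_eq_mul, h3]
      ring
    have hLL : v ⬝ᵥ (Lᵀ * L).mulVec v = L.mulVec v ⬝ᵥ L.mulVec v := by
      rw [← Matrix.mulVec_mulVec, wc_trans_dot]
    have hPB : v ⬝ᵥ P.mulVec B = y - L.mulVec v ⬝ᵥ J := by
      rw [hKYP2, dotProduct_sub, wc_trans_dot, dotProduct_comm v C, ← hy]
    have hz : (0:ℝ) ≤ L.mulVec v ⬝ᵥ L.mulVec v + 2 * w * (L.mulVec v ⬝ᵥ J)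
        + w^2 * (2 / (β - α)) := by
      have h0 : (0:ℝ) ≤ (L.mulVec v + w • J) ⬝ᵥ (L.mulVec v + w • J) :=
        Finset.sum_nonneg fun i _ => mul_self_nonneg _
      have hexp : (L.mulVec v + w • J) ⬝ᵥ (L.mulVec v + w • J)
          = L.mulVec v ⬝ᵥ L.mulVec v + 2 * w * (L.mulVec v ⬝ᵥ J) + w^2 * (J ⬝ᵥ J) := by
        rw [add_dotProduct, dotProduct_add, dotProduct_add,
          smul_dotProduct, dotProduct_smul, dotProduct_smul,
          smul_dotProduct]
        have := dotProduct_comm (L.mulVec v) J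
        simp only [smul_eq_mul]
        rw [dotProduct_comm J (L.mulVec v)]
        ring
      rw [hexp, hKYP3] at h0
      exact h0
    have hsec : w * y + w^2 / (β - α) < M := by
      have hs := hsector t y
      have hscalc : (1/(β-α)) * (n t y - α*y) * (β*y - n t y)
          = -(w*y) - w^2/(β-α) := by
        rw [hw]
        field_simp
        ring
      rw [hscalc] at hs
      linarith
    rw [hDeq, hKYP1]
    rw [Matrix.sub_mulVec, Matrix.neg_mulVec, dotProduct_sub, dotProduct_neg,
      hLL, Matrix.smul_mulVec, dotProduct_smul, hPB]
    have hVt : V t = v ⬝ᵥ P.mulVec v := rfl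
    rw [hVt, smul_eq_mul]
    have hdiv : w^2 * (2/(β-α)) = 2 * (w^2/(β-α)) := by ring
    nlinarith [hz, hsec]
  -- Gronwall
  set K : ℝ := 4*M/ε with hK
  set W : ℝ → ℝ := fun t => Real.exp (ε/2 * t) * (V t - K) with hWdef
  have hWderiv : ∀ t, 0 ≤ t →
      HasDerivAt W (Real.exp (ε/2*t) * (D t + (ε/2) * (V t - K))) t := by
    intro t ht
    have he : HasDerivAt (fun τ => Real.exp (ε/2 * τ)) (Real.exp (ε/2*t) * (ε/2)) t := by
      simpa using (((hasDerivAt_id t).const_mul (ε/2)).exp)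
    have h1 := he.fun_mul ((hVderiv t ht).sub_const K)
    exact h1.congr_deriv (by ring)
  have hWanti : AntitoneOn W (Set.Ici (0:ℝ)) := by
    apply antitoneOn_of_deriv_nonpos (convex_Ici 0)
    · intro t ht
      exact ((hWderiv t ht).continuousAt).continuousWithinAt
    · intro t ht
      rw [interior_Ici] at ht
      exact ((hWderiv t ht.le).differentiableAt).differentiableWithinAt
    · intro t ht
      rw [interior_Ici] at ht
      rw [(hWderiv t ht.le).deriv]
      have h1 := hDbound t ht.le
      have hKε : (ε/2) * K = 2*M := by
        rw [hK]; field_simp; ring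
      have h2 : D t + (ε/2) * (V t - K) ≤ 0 := by nlinarith
      exact mul_nonpos_of_nonneg_of_nonpos (Real.exp_pos _).le h2
  have hVbound : ∀ t, 0 ≤ t → V t ≤ K + |W 0| * Real.exp (-(ε/2) * t) := by
    intro t ht
    have h1 : W t ≤ W 0 := hWanti (Set.self_mem_Ici) ht ht
    have h2 : V t - K = Real.exp (ε/2*t) * (V t - K) * Real.exp (-(ε/2)*t) := by
      rw [mul_comm (Real.exp (ε/2*t)) (V t - K), mul_assoc, ← Real.exp_add]
      ring_nf
      simp
    have h3 : Real.exp (ε/2*t) * (V t - K) * Real.exp (-(ε/2)*t)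
        ≤ W 0 * Real.exp (-(ε/2)*t) := by
      have : W t = Real.exp (ε/2*t) * (V t - K) := rfl
      exact mul_le_mul_of_nonneg_right (this ▸ h1) (Real.exp_pos _).le
    have h4 : W 0 * Real.exp (-(ε/2)*t) ≤ |W 0| * Real.exp (-(ε/2)*t) :=
      mul_le_mul_of_nonneg_right (le_abs_self _) (Real.exp_pos _).le
    linarith [h2 ▸ le_trans h3 h4]
  -- Output bound
  set S : ℝ := C ⬝ᵥ P⁻¹.mulVec C with hS
  have hS0 : 0 ≤ S := by simpa using hP.inv.posSemidef.dotProduct_mulVec_nonneg C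
  have hCSb : ∀ t, (C ⬝ᵥ x t)^2 ≤ S * V t := fun t => wc_cs hP C (x t)
  have hYsq : Y^2 = S * K := by
    rw [hY, mul_pow, Real.sq_sqrt (mul_nonneg (by positivity) hS0), hK]
    field_simp
    ring
  have hYnn : 0 ≤ Y := by rw [hY]; positivity
  set G : ℝ := η^2 + 2*η*Y with hG
  have hG0 : 0 < G := by nlinarith
  set R : ℝ := |W 0| with hR
  have hR0 : 0 ≤ R := abs_nonneg _
  have htend : Filter.Tendsto (fun t => S * R * Real.exp (-(ε/2)*t))
      Filter.atTop (nhds 0) := by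
    have h1 : Filter.Tendsto (fun t:ℝ => (ε/2)*t) Filter.atTop Filter.atTop :=
      Filter.Tendsto.const_mul_atTop (by positivity) Filter.tendsto_id
    have h2 : Filter.Tendsto (fun t:ℝ => -(ε/2*t)) Filter.atTop Filter.atBot :=
      Filter.tendsto_neg_atTop_atBot.comp h1
    have h3 : Filter.Tendsto (fun t:ℝ => Real.exp (-(ε/2)*t)) Filter.atTop (nhds 0) := by
      have heq : (fun t:ℝ => Real.exp (-(ε/2)*t)) = Real.exp ∘ (fun t:ℝ => -(ε/2*t)) := by
        funext t; simp [neg_mul]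
      rw [heq]
      exact Real.tendsto_exp_atBot.comp h2
    have := h3.const_mul (S * R)
    simpa using this
  obtain ⟨t0, ht0⟩ := Filter.eventually_atTop.1 (htend.eventually_lt_const hG0)
  refine ⟨max t0 0, le_max_right _ _, ?_⟩
  intro t htt
  have ht : 0 ≤ t := ((le_max_right t0 0).trans_lt htt).le
  have hRe : S * R * Real.exp (-(ε/2)*t) < G :=
    ht0 t ((le_max_left t0 0).trans_lt htt).le
  have h1 := hCSb t
  have h2 : S * V t ≤ S * (K + R * Real.exp (-(ε/2)*t)) :=
    mul_le_mul_of_nonneg_left (hVbound t ht) hS0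
  have hYη : (Y + η)^2 = Y^2 + G := by rw [hG]; ring
  have hysq : (C ⬝ᵥ x t)^2 < (Y + η)^2 := by nlinarith
  have hpos : 0 < Y + η := by linarith
  calc |C ⬝ᵥ x t| < Y + η := by
        refine lt_of_pow_lt_pow_left₀ 2 hpos.le ?_
        rwa [sq_abs]
end

section
/- Let A ∈ ℝ^{m×m}, B ∈ ℝ^{m×1}, C ∈ ℝ^{1×m}. Let α₁ < β₁ and α₂ < β₂ be real scalars, ε₁, ε₂ > 0, M₁ > 0. Suppose for i = 1, 2 the matrices (P_i, L_i, J_i), with P_i symmetric positive definite, satisfy the ε_i-KYP conditions for the shifted realization (A − α_i BC, B, C, 1/(β_i − α_i)): P_i(A − α_i BC) + (A − α_i BC)ᵀP_i = −L_iᵀL_i − (ε_i/2)P_i, P_i B = Cᵀ − L_iᵀJ_i, J_iᵀJ_i = 2/(β_i − α_i). Let n : ℝ × ℝ → ℝ be continuous and suppose: (b) (1/(β₁−α₁))·(n(t,y) − α₁y)·(β₁y − n(t,y)) > −M₁ for all t, y; and (c) there exists η₁ > 0 such that for all t and all y with |y| < 2√((M₁/ε₁)·C P₁⁻¹ Cᵀ)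 + η₁, one has (n(t,y) − α₂y)·(β₂y − n(t,y)) ≥ 0. Then every differentiable solution x : [0, ∞) → ℝ^m of x'(t) = A x(t) − B n(t, C x(t)) satisfies x(t) → 0 as t → ∞. -/
open Matrix Filter

lemma posdef_pos' {m : ℕ} {P : Matrix (Fin m) (Fin m) ℝ} (hP : P.PosDef)
    {v : Fin m → ℝ} (hv : v ≠ 0) : 0 < v ⬝ᵥ P.mulVec v := by
  have h := hP.dotProduct_mulVec_pos hv
  simpa using h

lemma posdef_nonneg' {m : ℕ} {P : Matrix (Fin m) (Fin m) ℝ} (hP : P.PosDef)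
    (v : Fin m → ℝ) : 0 ≤ v ⬝ᵥ P.mulVec v := by
  rcases eq_or_ne v 0 with h | h
  · simp [h]
  · exact (posdef_pos' hP h).le

lemma posdef_symm' {m : ℕ} {P : Matrix (Fin m) (Fin m) ℝ} (hP : P.PosDef) : Pᵀ = P := by
  have h := hP.1.eq
  have h2 : Pᴴ = Pᵀ := by ext i j; simp [conjTranspose_apply]
  rw [← h2, h]

lemma dotProduct_self_nonneg'' {m : ℕ} (q : Fin m → ℝ) : 0 ≤ q ⬝ᵥ q :=
  Finset.sum_nonneg fun i _ => mul_self_nonneg (q i)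

/-- Cauchy–Schwarz inequality for a positive definite quadratic form. -/
lemma cs_ineq {m : ℕ} {P : Matrix (Fin m) (Fin m) ℝ} (hP : P.PosDef)
    (c v : Fin m → ℝ) : (c ⬝ᵥ v)^2 ≤ (v ⬝ᵥ P.mulVec v) * (c ⬝ᵥ P⁻¹.mulVec c) := by
  have hdet : IsUnit P.det := isUnit_iff_ne_zero.2 hP.det_pos.ne'
  set d := P⁻¹.mulVec c with hd
  have hc : P.mulVec d = c := by
    rw [hd, Matrix.mulVec_mulVec, Matrix.mul_nonsing_inv _ hdet, Matrix.one_mulVec]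
  have hsym := posdef_symm' hP
  have hYd : ∀ w : Fin m → ℝ, d ⬝ᵥ P.mulVec w = c ⬝ᵥ w := by
    intro w
    rw [Matrix.dotProduct_mulVec, ← Matrix.mulVec_transpose, hsym, hc]
  have hVd : c ⬝ᵥ d = d ⬝ᵥ P.mulVec d := by
    rw [hYd d, dotProduct_comm]
  have hcd : c ⬝ᵥ P⁻¹.mulVec c = c ⬝ᵥ d := rfl
  have hnn : ∀ lam : ℝ, 0 ≤ (v ⬝ᵥ P.mulVec v) - 2*lam*(c ⬝ᵥ v) + lam^2 * (c ⬝ᵥ d) := by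
    intro lam
    have h0 := posdef_nonneg' hP (v - lam • d)
    have hexp : (v - lam • d) ⬝ᵥ P.mulVec (v - lam • d)
        = (v ⬝ᵥ P.mulVec v) - 2*lam*(c ⬝ᵥ v) + lam^2 * (c ⬝ᵥ d) := by
      rw [Matrix.mulVec_sub, Matrix.mulVec_smul, sub_dotProduct,
        dotProduct_sub, dotProduct_sub, smul_dotProduct,
        dotProduct_smul, smul_dotProduct, dotProduct_smul]
      have h1 : d ⬝ᵥ P.mulVec v = c ⬝ᵥ v := hYd v
      have h2 : v ⬝ᵥ P.mulVec d = c ⬝ᵥ v := by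
        rw [Matrix.dotProduct_mulVec, ← Matrix.mulVec_transpose, hsym, dotProduct_comm, hYd v]
      rw [h1, h2, ← hVd]
      simp only [smul_eq_mul]; ring
    linarith [hexp ▸ h0]
  rw [hcd]
  rcases eq_or_ne (c ⬝ᵥ d) 0 with h0 | h0
  · have hdz : d = 0 := by
      by_contra hdz
      exact (posdef_pos' hP hdz).ne' (by rw [← hVd, h0])
    have : c ⬝ᵥ v = 0 := by rw [← hYd v, hdz, zero_dotProduct]
    simp [this, h0]
  · have hpos : 0 < c ⬝ᵥ d := by
      rcases lt_or_gt_of_ne h0 with h | h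
      · exfalso; nlinarith [hVd, posdef_nonneg' hP d]
      · exact h
    set Y := c ⬝ᵥ v
    set c₀ := c ⬝ᵥ d
    set V := v ⬝ᵥ P.mulVec v
    have h := hnn (Y/c₀)
    have hid : (V - 2*(Y/c₀)*Y + (Y/c₀)^2*c₀)*c₀^2 = (V*c₀ - Y^2)*c₀ := by
      field_simp; ring
    have h3 : 0 ≤ (V*c₀ - Y^2)*c₀ := hid ▸ mul_nonneg h (sq_nonneg c₀)
    nlinarith [h3, hpos]

/-- Derivative of a quadratic form along a differentiable curve. -/
lemma hasDerivAt_quadForm {m : ℕ} (P : Matrix (Fin m) (Fin m) ℝ) {x : ℝ → Fin m → ℝ}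
    {x' : Fin m → ℝ} {t : ℝ} (h : HasDerivAt x x' t) :
    HasDerivAt (fun s => x s ⬝ᵥ P.mulVec (x s))
      (x' ⬝ᵥ P.mulVec (x t) + x t ⬝ᵥ P.mulVec x') t := by
  have hi : ∀ i, HasDerivAt (fun s => x s i) (x' i) t := hasDerivAt_pi.1 h
  have key : ∀ i j : Fin m, HasDerivAt (fun s => x s i * (P i j * x s j))
      (x' i * (P i j * x t j) + x t i * (P i j * x' j)) t :=
    fun i j => (hi i).mul ((hi j).const_mul (P i j))
  have H : HasDerivAt (fun y => ∑ i, ∑ j, x y i * (P i j * x y j))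
      (∑ i, ∑ j, (x' i * (P i j * x t j) + x t i * (P i j * x' j))) t :=
    HasDerivAt.fun_sum (fun i (_ : i ∈ Finset.univ) =>
    HasDerivAt.fun_sum (fun j (_ : j ∈ Finset.univ) => key i j))
  convert H using 1
  · funext s
    simp [dotProduct, mulVec, Finset.mul_sum]
  · simp [dotProduct, mulVec, Finset.mul_sum, Finset.sum_add_distrib]

/-- Key dissipation inequality following from the ε-KYP conditions. -/
lemma kyp_bound {m p : ℕ} (A : Matrix (Fin m) (Fin m) ℝ) (B C : Fin m → ℝ)
    (α β ε : ℝ) (hαβ : α < β) {P : Matrix (Fin m) (Fin m) ℝ} (hP : P.PosDef)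
    (L : Matrix (Fin p) (Fin m) ℝ) (J : Fin p → ℝ)
    (h1 : P * (A - α • vecMulVec B C) + (A - α • vecMulVec B C)ᵀ * P
          = -(Lᵀ * L) - (ε / 2) • P)
    (h2 : P.mulVec B = C - Lᵀ.mulVec J) (h3 : J ⬝ᵥ J = 2 / (β - α))
    (v : Fin m → ℝ) (u : ℝ) :
    (A.mulVec v - u • B) ⬝ᵥ P.mulVec v + v ⬝ᵥ P.mulVec (A.mulVec v - u • B)
      ≤ -(ε/2) * (v ⬝ᵥ P.mulVec v)
        - (2/(β-α)) * ((u - α*(C ⬝ᵥ v)) * (β*(C ⬝ᵥ v) - u)) := by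
  have hβα : β - α ≠ 0 := sub_ne_zero.2 hαβ.ne'
  have hsym := posdef_symm' hP
  set Ah := A - α • vecMulVec B C with hAh
  set y := C ⬝ᵥ v with hy
  set w := u - α * y with hw
  have hvf : A.mulVec v - u • B = Ah.mulVec v - w • B := by
    rw [hAh, Matrix.sub_mulVec, Matrix.smul_mulVec]
    have hbc : (vecMulVec B C).mulVec v = y • B := by
      funext i
      simp [vecMulVec, mulVec, dotProduct, Finset.mul_sum]
      rw [hy, dotProduct, Finset.sum_mul]
      exact Finset.sum_congr rfl fun j _ => by ring
    rw [hbc, hw, smul_smul]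
    funext i
    simp [smul_eq_mul]
    ring
  have hdA : ∀ (M : Matrix (Fin m) (Fin m) ℝ) (z : Fin m → ℝ),
      z ⬝ᵥ Mᵀ.mulVec (P.mulVec v) = M.mulVec z ⬝ᵥ P.mulVec v := by
    intro M z
    rw [Matrix.dotProduct_mulVec, Matrix.vecMul_transpose]
  have hquad : Ah.mulVec v ⬝ᵥ P.mulVec v + v ⬝ᵥ P.mulVec (Ah.mulVec v)
      = -(L.mulVec v ⬝ᵥ L.mulVec v) - (ε/2) * (v ⬝ᵥ P.mulVec v) := by
    have e1 : v ⬝ᵥ (P * Ah + Ahᵀ * P).mulVec v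
        = v ⬝ᵥ P.mulVec (Ah.mulVec v) + Ah.mulVec v ⬝ᵥ P.mulVec v := by
      rw [Matrix.add_mulVec, dotProduct_add, ← Matrix.mulVec_mulVec,
        ← Matrix.mulVec_mulVec, hdA]
    have e2 : v ⬝ᵥ (-(Lᵀ * L) - (ε / 2) • P).mulVec v
        = -(L.mulVec v ⬝ᵥ L.mulVec v) - (ε/2) * (v ⬝ᵥ P.mulVec v) := by
      rw [Matrix.sub_mulVec, dotProduct_sub, Matrix.neg_mulVec,
        dotProduct_neg, ← Matrix.mulVec_mulVec, Matrix.smul_mulVec,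
        dotProduct_smul, Matrix.dotProduct_mulVec (A := Lᵀ), Matrix.vecMul_transpose]
      simp [smul_eq_mul]
    have e3 : v ⬝ᵥ (P * Ah + Ahᵀ * P).mulVec v
        = v ⬝ᵥ (-(Lᵀ * L) - (ε / 2) • P).mulVec v := by rw [h1]
    linarith [e1, e2, e3]
  have hBP : B ᵥ* P = P *ᵥ B := by rw [← hsym, Matrix.vecMul_transpose, hsym]
  have hBPv : B ⬝ᵥ P.mulVec v = y - L.mulVec v ⬝ᵥ J := by
    rw [Matrix.dotProduct_mulVec, hBP, h2, sub_dotProduct, ← hy]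
    congr 1
    rw [dotProduct_comm, Matrix.dotProduct_mulVec, Matrix.vecMul_transpose]
  have hvPB : v ⬝ᵥ P.mulVec B = y - L.mulVec v ⬝ᵥ J := by
    rw [h2, dotProduct_sub, dotProduct_comm v C, ← hy]
    congr 1
    rw [Matrix.dotProduct_mulVec, Matrix.vecMul_transpose]
  set s := L.mulVec v ⬝ᵥ L.mulVec v with hs
  set r := L.mulVec v ⬝ᵥ J with hr
  set V := v ⬝ᵥ P.mulVec v with hV
  have hLHS : (A.mulVec v - u • B) ⬝ᵥ P.mulVec v + v ⬝ᵥ P.mulVec (A.mulVec v - u • B)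
      = -s - (ε/2)*V - 2*w*(y - r) := by
    rw [hvf, sub_dotProduct, smul_dotProduct, Matrix.mulVec_sub,
      Matrix.mulVec_smul, dotProduct_sub, dotProduct_smul,
      hBPv, hvPB]
    simp only [smul_eq_mul]
    linear_combination hquad
  have h4 : 0 ≤ s - 2*w*r + w^2 * (2/(β-α)) := by
    have h0 := dotProduct_self_nonneg'' (L.mulVec v - w • J)
    have hexp : (L.mulVec v - w • J) ⬝ᵥ (L.mulVec v - w • J)
        = s - 2*w*r + w^2 * (2/(β-α)) := by
      rw [sub_dotProduct, dotProduct_sub, dotProduct_sub,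
        smul_dotProduct, dotProduct_smul, smul_dotProduct,
        dotProduct_smul, h3, hs, hr, dotProduct_comm J (L.mulVec v), ← hr]
      simp only [smul_eq_mul]; ring
    linarith [hexp ▸ h0]
  have h5 : (2/(β-α))*w^2 - 2*w*y = -((2/(β-α)) * (w * (β*y - u))) := by
    rw [hw]
    field_simp
    ring
  rw [hLHS]
  linarith [h4, h5]

/-- One-sided Grönwall comparison for curves with a derivative bound. -/
lemma gronwall_ge {V W : ℝ → ℝ} {a K ε : ℝ}
    (hV : ∀ t, a ≤ t → HasDerivAt V (W t) t)
    (hb : ∀ t, a ≤ t → W t ≤ K * V t + ε) :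
    ∀ t, a ≤ t → V t ≤ gronwallBound (V a) K ε (t - a) := by
  intro t ht
  exact le_gronwallBound_of_liminf_deriv_right_le
    (fun s hs => (hV s hs.1).continuousAt.continuousWithinAt)
    (fun s hs r hr => by
      have h := ((hV s hs.1).hasDerivWithinAt (s := Set.Ici s)).liminf_right_slope_le hr
      simpa [slope_def_field, div_eq_inv_mul] using h)
    le_rfl (fun s hs => hb s hs.1) t (Set.right_mem_Icc.2 ht)

set_option maxHeartbeats 2000000 in
/-- Theorem 2 (two-step sequential circle criterion), state-space form for a
strictly proper linear block: the first (weak) step confines the output,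
and on that region the nonlinearity lies in the sector `[α₂, β₂]`, so the
standard Circle Criterion yields global asymptotic stability. -/
theorem two_step_sequential_circle_criterion {m p : ℕ}
    (A : Matrix (Fin m) (Fin m) ℝ) (B : Fin m → ℝ) (C : Fin m → ℝ)
    (α₁ β₁ α₂ β₂ ε₁ ε₂ M₁ : ℝ)
    (hαβ₁ : α₁ < β₁) (hαβ₂ : α₂ < β₂)
    (hε₁ : 0 < ε₁) (hε₂ : 0 < ε₂) (hM₁ : 0 < M₁)
    (P₁ P₂ : Matrix (Fin m) (Fin m) ℝ) (hP₁ : P₁.PosDef) (hP₂ : P₂.PosDef)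
    (L₁ L₂ : Matrix (Fin p) (Fin m) ℝ) (J₁ J₂ : Fin p → ℝ)
    (hKYP1₁ : P₁ * (A - α₁ • vecMulVec B C) + (A - α₁ • vecMulVec B C)ᵀ * P₁
                = -(L₁ᵀ * L₁) - (ε₁ / 2) • P₁)
    (hKYP2₁ : P₁.mulVec B = C - L₁ᵀ.mulVec J₁)
    (hKYP3₁ : J₁ ⬝ᵥ J₁ = 2 / (β₁ - α₁))
    (hKYP1₂ : P₂ * (A - α₂ • vecMulVec B C) + (A - α₂ • vecMulVec B C)ᵀ * P₂
                = -(L₂ᵀ * L₂) - (ε₂ / 2) • P₂)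
    (hKYP2₂ : P₂.mulVec B = C - L₂ᵀ.mulVec J₂)
    (hKYP3₂ : J₂ ⬝ᵥ J₂ = 2 / (β₂ - α₂))
    (n : ℝ → ℝ → ℝ) (hn : Continuous fun q : ℝ × ℝ => n q.1 q.2)
    (hb : ∀ t y, -M₁ < (1 / (β₁ - α₁)) * (n t y - α₁ * y) * (β₁ * y - n t y))
    (hc : ∃ η₁ > (0 : ℝ), ∀ t y,
        |y| < 2 * Real.sqrt ((M₁ / ε₁) * (C ⬝ᵥ P₁⁻¹.mulVec C)) + η₁ →
          0 ≤ (n t y - α₂ * y) * (β₂ * y - n t y))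
    (x : ℝ → Fin m → ℝ)
    (hx : ∀ t, 0 ≤ t → HasDerivAt x (A.mulVec (x t) - n t (C ⬝ᵥ x t) • B) t) :
    Tendsto x atTop (nhds 0) := by
  obtain ⟨η₁, hη₁, hsec⟩ := hc
  set xd : ℝ → Fin m → ℝ := fun t => A.mulVec (x t) - n t (C ⬝ᵥ x t) • B with hxd
  set V₁ : ℝ → ℝ := fun t => x t ⬝ᵥ P₁.mulVec (x t) with hV₁def
  set V₂ : ℝ → ℝ := fun t => x t ⬝ᵥ P₂.mulVec (x t) with hV₂def
  set W₁ : ℝ → ℝ := fun t => xd t ⬝ᵥ P₁.mulVec (x t) + x t ⬝ᵥ P₁.mulVec (xd t) with hW₁def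
  set W₂ : ℝ → ℝ := fun t => xd t ⬝ᵥ P₂.mulVec (x t) + x t ⬝ᵥ P₂.mulVec (xd t) with hW₂def
  have hdV₁ : ∀ t, (0:ℝ) ≤ t → HasDerivAt V₁ (W₁ t) t :=
    fun t ht => hasDerivAt_quadForm P₁ (hx t ht)
  have hdV₂ : ∀ t, (0:ℝ) ≤ t → HasDerivAt V₂ (W₂ t) t :=
    fun t ht => hasDerivAt_quadForm P₂ (hx t ht)
  -- Step 1: weak sector bound gives eventual confinement of the output.
  have hbd₁ : ∀ t, (0:ℝ) ≤ t → W₁ t ≤ (-(ε₁/2)) * V₁ t + 2*M₁ := by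
    intro t ht
    have h := kyp_bound A B C α₁ β₁ ε₁ hαβ₁ hP₁ L₁ J₁ hKYP1₁ hKYP2₁ hKYP3₁
      (x t) (n t (C ⬝ᵥ x t))
    have hb' := hb t (C ⬝ᵥ x t)
    rw [mul_assoc] at hb'
    have h2d : (2/(β₁-α₁)) * ((n t (C ⬝ᵥ x t) - α₁*(C ⬝ᵥ x t)) * (β₁*(C ⬝ᵥ x t) - n t (C ⬝ᵥ x t)))
        = 2 * ((1/(β₁-α₁)) * ((n t (C ⬝ᵥ x t) - α₁*(C ⬝ᵥ x t)) * (β₁*(C ⬝ᵥ x t) - n t (C ⬝ᵥ x t)))) := by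
      ring
    simp only [hW₁def, hV₁def, hxd]
    linarith [h, hb', h2d]
  have hg₁ := gronwall_ge hdV₁ hbd₁
  have hKne : (-(ε₁/2)) ≠ 0 := by
    simp only [ne_eq, neg_eq_zero]
    positivity
  have hV₁0 : 0 ≤ V₁ 0 := posdef_nonneg' hP₁ (x 0)
  have hVbound : ∀ t, (0:ℝ) ≤ t → V₁ t ≤ V₁ 0 * Real.exp (-(ε₁/2)*t) + 4*M₁/ε₁ := by
    intro t ht
    have h := hg₁ t ht
    rw [sub_zero, gronwallBound_of_K_ne_0 hKne] at h
    have hc1 : (2*M₁)/(-(ε₁/2)) = -(4*M₁/ε₁) := by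
      rw [div_eq_iff hKne]
      field_simp
      ring
    rw [hc1] at h
    have h4 : (0:ℝ) ≤ 4*M₁/ε₁ := by positivity
    have hE0 : 0 < Real.exp (-(ε₁/2)*t) := Real.exp_pos _
    nlinarith [h, mul_nonneg h4 hE0.le]
  set c₀ := C ⬝ᵥ P₁⁻¹.mulVec C with hc₀def
  have hc₀ : 0 ≤ c₀ := posdef_nonneg' hP₁.inv C
  set δ' := η₁^2/(c₀+1) with hδ'def
  have hδ' : 0 < δ' := by positivity
  have hexp : Tendsto (fun t:ℝ => Real.exp (-(ε₁/2)*t)) atTop (nhds 0) := by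
    have h1 : Tendsto (fun t:ℝ => -(ε₁/2)*t) atTop atBot :=
      Tendsto.const_mul_atTop_of_neg (by linarith) tendsto_id
    exact Real.tendsto_exp_atBot.comp h1
  have htend : Tendsto (fun t:ℝ => V₁ 0 * Real.exp (-(ε₁/2)*t)) atTop (nhds 0) := by
    have := hexp.const_mul (V₁ 0)
    simpa using this
  obtain ⟨T₀, hT₀⟩ := eventually_atTop.1 (htend.eventually (gt_mem_nhds hδ'))
  set T := max T₀ 0 with hTdef
  have hT0 : (0:ℝ) ≤ T := le_max_right _ _
  have hV₁T : ∀ t, T ≤ t → V₁ t < 4*M₁/ε₁ + δ' := by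
    intro t ht
    have h1 := hVbound t (le_trans hT0 ht)
    have h2 := hT₀ t (le_trans (le_max_left _ _) ht)
    linarith
  have hy : ∀ t, T ≤ t →
      |C ⬝ᵥ x t| < 2 * Real.sqrt ((M₁ / ε₁) * c₀) + η₁ := by
    intro t ht
    have hcs : (C ⬝ᵥ x t)^2 ≤ V₁ t * c₀ := cs_ineq hP₁ C (x t)
    have hVt := hV₁T t ht
    set s₀ := Real.sqrt ((M₁/ε₁)*c₀) with hs₀def
    have hs₀ : 0 ≤ s₀ := Real.sqrt_nonneg _
    have hs₀sq : s₀^2 = (M₁/ε₁)*c₀ := Real.sq_sqrt (mul_nonneg (by positivity) hc₀)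
    have hbp : 0 < 2*s₀ + η₁ := by linarith
    rw [← Real.sqrt_sq_eq_abs, show (2:ℝ) * s₀ + η₁ = 2*s₀ + η₁ from rfl,
      Real.sqrt_lt' hbp]
    have hmm : V₁ t * c₀ ≤ (4*M₁/ε₁ + δ') * c₀ := mul_le_mul_of_nonneg_right hVt.le hc₀
    have hδc : δ' * c₀ < η₁^2 := by
      rw [hδ'def, div_mul_eq_mul_div, div_lt_iff₀ (by linarith)]
      nlinarith [mul_pos hη₁ hη₁, hc₀]
    have hexpand : (4*M₁/ε₁ + δ') * c₀ = 4*((M₁/ε₁)*c₀) + δ'*c₀ := by ring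
    nlinarith [hcs, hmm, hδc, hs₀sq, hs₀, hη₁, mul_nonneg hs₀ hη₁.le, hexpand]
  -- Step 2: strong sector condition on the confined region.
  have hbd₂ : ∀ t, T ≤ t → W₂ t ≤ (-(ε₂/2)) * V₂ t + 0 := by
    intro t ht
    have h := kyp_bound A B C α₂ β₂ ε₂ hαβ₂ hP₂ L₂ J₂ hKYP1₂ hKYP2₂ hKYP3₂
      (x t) (n t (C ⬝ᵥ x t))
    have hs := hsec t (C ⬝ᵥ x t) (hy t ht)
    have hcoef : (0:ℝ) < 2/(β₂-α₂) := div_pos two_pos (sub_pos.2 hαβ₂)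
    simp only [hW₂def, hV₂def, hxd]
    linarith [h, mul_nonneg hcoef.le hs]
  have hdV₂' : ∀ t, T ≤ t → HasDerivAt V₂ (W₂ t) t :=
    fun t ht => hdV₂ t (le_trans hT0 ht)
  have hg₂ := gronwall_ge hdV₂' hbd₂
  have hdecay : Tendsto (fun t:ℝ => V₂ T * Real.exp (-(ε₂/2)*(t-T))) atTop (nhds 0) := by
    have h1 : Tendsto (fun t:ℝ => t - T) atTop atTop := by
      simpa [sub_eq_add_neg] using tendsto_atTop_add_const_right atTop (-T) tendsto_id
    have h2 : Tendsto (fun t:ℝ => -(ε₂/2)*(t-T)) atTop atBot :=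
      Tendsto.const_mul_atTop_of_neg (by linarith) h1
    have h3 := Real.tendsto_exp_atBot.comp h2
    have := h3.const_mul (V₂ T)
    simpa using this
  have hVt2 : Tendsto V₂ atTop (nhds 0) := by
    refine tendsto_of_tendsto_of_tendsto_of_le_of_le' tendsto_const_nhds hdecay
      (Eventually.of_forall fun t => posdef_nonneg' hP₂ (x t)) ?_
    refine eventually_atTop.2 ⟨T, fun t ht => ?_⟩
    have h := hg₂ t ht
    rwa [gronwallBound_ε0] at h
  refine tendsto_pi_nhds.2 fun i => ?_
  have h0i : (0 : Fin m → ℝ) i = 0 := rfl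
  rw [h0i]
  set k := Pi.single i (1:ℝ) ⬝ᵥ P₂⁻¹.mulVec (Pi.single i 1) with hkdef
  have hk : 0 ≤ k := posdef_nonneg' hP₂.inv _
  have hcs2 : ∀ t, (x t i)^2 ≤ V₂ t * k := by
    intro t
    have h := cs_ineq hP₂ (Pi.single i 1) (x t)
    rwa [single_dotProduct, one_mul] at h
  have hgt : Tendsto (fun t => Real.sqrt (V₂ t * k)) atTop (nhds 0) := by
    have := (hVt2.mul_const k).sqrt
    simpa using this
  refine squeeze_zero_norm' (Eventually.of_forall fun t => ?_) hgt
  rw [Real.norm_eq_abs, ← Real.sqrt_sq_eq_abs]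
  exact Real.sqrt_le_sqrt (hcs2 t)
end

section
/- Let A ∈ ℝ^{m×m}, B ∈ ℝ^{m×1}, C ∈ ℝ^{1×m}, and let K ≥ 2 be an integer. Let α₁, …, α_K and β₁, …, β_K be real scalars with α_i < β_i, let ε₁, …, ε_K > 0 and M₁, …, M_{K−1} > 0. Suppose for each i = 1, …, K the matrices (P_i, L_i, J_i), with P_i symmetric positive definite, satisfy the ε_i-KYP conditions for (A − α_i BC, B, C, 1/(β_i − α_i)): P_i(A − α_i BC) + (A − α_i BC)ᵀP_i = −L_iᵀL_i − (ε_i/2)P_i, P_i B = Cᵀ − L_iᵀJ_i, J_iᵀJ_i = 2/(β_i − α_i). Let n : ℝ × ℝ → ℝ be continuous and suppose: (1/(β₁−α₁))·(n(t,y) − α₁y)·(β₁y − n(t,y)) > −M₁ for all t, y; for each i = 1, …, K−2 there exists η_i > 0 such that |y| < 2√((M_i/ε_i)·C P_i⁻¹ Cᵀ) + η_i implies (1/(β_{i+1}−α_{i+1}))·(n(t,y) − α_{i+1}y)·(β_{i+1}y − n(t,y)) > −M_{i+1}; and there exists η_{K−1} > 0 such that |y| < 2√((M_{K−1}/ε_{K−1})·C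 P_{K−1}⁻¹ Cᵀ) + η_{K−1} implies (n(t,y) − α_K y)·(β_K y − n(t,y)) ≥ 0. Then every differentiable solution x : [0, ∞) → ℝ^m of x'(t) = A x(t) − B n(t, C x(t)) satisfies x(t) → 0 as t → ∞. -/
open Matrix Filter

section KStepAux

variable {m p : ℕ}

private lemma mytranspose_eq {P : Matrix (Fin m) (Fin m) ℝ} (hP : P.IsHermitian) : Pᵀ = P := by
  ext i j
  rw [transpose_apply]
  conv_lhs => rw [← hP.eq]
  simp [conjTranspose_apply]

private lemma mysymm_dot {P : Matrix (Fin m) (Fin m) ℝ} (hPt : Pᵀ = P) (a b : Fin m → ℝ) :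
    a ⬝ᵥ P *ᵥ b = b ⬝ᵥ P *ᵥ a := by
  calc a ⬝ᵥ P *ᵥ b = a ᵥ* P ⬝ᵥ b := dotProduct_mulVec _ _ _
    _ = (Pᵀ *ᵥ a) ⬝ᵥ b := by rw [← mulVec_transpose]
    _ = b ⬝ᵥ (P *ᵥ a) := by rw [hPt, dotProduct_comm]

private lemma myquad_nonneg {P : Matrix (Fin m) (Fin m) ℝ} (hP : P.PosSemidef)
    (z : Fin m → ℝ) : 0 ≤ z ⬝ᵥ P *ᵥ z := by simpa using hP.dotProduct_mulVec_nonneg z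

private lemma myhasDerivAt_quadForm (P : Matrix (Fin m) (Fin m) ℝ)
    {x : ℝ → Fin m → ℝ} {v : Fin m → ℝ} {t : ℝ} (hx : HasDerivAt x v t) :
    HasDerivAt (fun s => x s ⬝ᵥ P *ᵥ (x s))
      (v ⬝ᵥ P *ᵥ (x t) + x t ⬝ᵥ P *ᵥ v) t := by
  have hxi : ∀ i, HasDerivAt (fun s => x s i) (v i) t := hasDerivAt_pi.mp hx
  have key : HasDerivAt (fun s => ∑ i, ∑ j, x s i * (P i j * x s j))
      (∑ i, ∑ j, (v i * (P i j * x t j) + x t i * (P i j * v j))) t := by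
    refine HasDerivAt.fun_sum fun i _ => HasDerivAt.fun_sum fun j _ => ?_
    exact (hxi i).mul ((hxi j).const_mul _)
  have e1 : (fun s => x s ⬝ᵥ P *ᵥ (x s)) = fun s => ∑ i, ∑ j, x s i * (P i j * x s j) := by
    funext s; simp [dotProduct, mulVec, Finset.mul_sum]
  have e2 : v ⬝ᵥ P *ᵥ (x t) + x t ⬝ᵥ P *ᵥ v
      = ∑ i, ∑ j, (v i * (P i j * x t j) + x t i * (P i j * v j)) := by
    simp [dotProduct, mulVec, Finset.mul_sum, Finset.sum_add_distrib]
  rw [e1, e2]; exact key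

private lemma myquad_ineq (A : Matrix (Fin m) (Fin m) ℝ) (B C : Fin m → ℝ)
    (α β ε : ℝ) (hαβ : α < β)
    (P : Matrix (Fin m) (Fin m) ℝ) (hPt : Pᵀ = P)
    (L : Matrix (Fin p) (Fin m) ℝ) (J : Fin p → ℝ)
    (k1 : P * (A - α • vecMulVec B C) + (A - α • vecMulVec B C)ᵀ * P
          = -(Lᵀ * L) - (ε / 2) • P)
    (k2 : P *ᵥ B = C - Lᵀ *ᵥ J)
    (k3 : J ⬝ᵥ J = 2 / (β - α))
    (z : Fin m → ℝ) (u : ℝ) :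
    (A *ᵥ z - u • B) ⬝ᵥ P *ᵥ z + z ⬝ᵥ P *ᵥ (A *ᵥ z - u • B)
      ≤ -(ε/2) * (z ⬝ᵥ P *ᵥ z)
        - 2 * ((1/(β-α)) * (u - α * (C ⬝ᵥ z)) * (β * (C ⬝ᵥ z) - u)) := by
  have hba : β - α ≠ 0 := sub_ne_zero.mpr hαβ.ne'
  set Ah : Matrix (Fin m) (Fin m) ℝ := A - α • vecMulVec B C with hAh
  set y : ℝ := C ⬝ᵥ z with hy
  set uh : ℝ := u - α * y with huh
  have hvv : (vecMulVec B C) *ᵥ z = y • B := by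
    funext i
    simp only [mulVec, vecMulVec_apply, dotProduct, Pi.smul_apply, smul_eq_mul, hy]
    rw [Finset.sum_mul]
    exact Finset.sum_congr rfl fun j _ => by ring
  have hv : A *ᵥ z - u • B = Ah *ᵥ z - uh • B := by
    rw [hAh, sub_mulVec, smul_mulVec, hvv, huh]
    module
  rw [hv]
  have e1 : (Ah *ᵥ z - uh • B) ⬝ᵥ P *ᵥ z
      = (Ah *ᵥ z) ⬝ᵥ P *ᵥ z - uh * (B ⬝ᵥ P *ᵥ z) := by
    rw [sub_dotProduct, smul_dotProduct]; simp
  have e2 : z ⬝ᵥ P *ᵥ (Ah *ᵥ z - uh • B)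
      = z ⬝ᵥ P *ᵥ (Ah *ᵥ z) - uh * (z ⬝ᵥ P *ᵥ B) := by
    rw [mulVec_sub, dotProduct_sub, mulVec_smul, dotProduct_smul]; simp
  have e3 : (Ah *ᵥ z) ⬝ᵥ P *ᵥ z = z ⬝ᵥ (Ahᵀ * P) *ᵥ z := by
    rw [← mulVec_mulVec, dotProduct_mulVec (v := z), ← mulVec_transpose,
      transpose_transpose, dotProduct_comm]
  have e4 : z ⬝ᵥ P *ᵥ (Ah *ᵥ z) = z ⬝ᵥ (P * Ah) *ᵥ z := by rw [← mulVec_mulVec]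
  have e5 : z ⬝ᵥ (Ahᵀ * P) *ᵥ z + z ⬝ᵥ (P * Ah) *ᵥ z
      = z ⬝ᵥ ((P * Ah + Ahᵀ * P) *ᵥ z) := by
    rw [add_mulVec, dotProduct_add]; ring
  have e6 : z ⬝ᵥ ((P * Ah + Ahᵀ * P) *ᵥ z)
      = -((L *ᵥ z) ⬝ᵥ (L *ᵥ z)) - (ε/2) * (z ⬝ᵥ P *ᵥ z) := by
    rw [k1, sub_mulVec, dotProduct_sub, neg_mulVec, dotProduct_neg,
      smul_mulVec, dotProduct_smul, ← mulVec_mulVec,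
      dotProduct_mulVec (v := z), ← mulVec_transpose, transpose_transpose]
    simp
  have e7 : B ⬝ᵥ P *ᵥ z = z ⬝ᵥ P *ᵥ B := mysymm_dot hPt B z
  have e8 : z ⬝ᵥ P *ᵥ B = y - (L *ᵥ z) ⬝ᵥ J := by
    rw [k2, dotProduct_sub, dotProduct_comm, ← hy,
      dotProduct_mulVec (v := z), ← mulVec_transpose, transpose_transpose]
  set w : Fin p → ℝ := L *ᵥ z - uh • J with hw
  have hwnn : (0:ℝ) ≤ w ⬝ᵥ w := by
    rw [dotProduct]
    exact Finset.sum_nonneg fun i _ => mul_self_nonneg _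
  have hwe : w ⬝ᵥ w = (L *ᵥ z) ⬝ᵥ (L *ᵥ z) - 2 * uh * ((L *ᵥ z) ⬝ᵥ J)
      + uh^2 * (2/(β-α)) := by
    rw [hw, sub_dotProduct, dotProduct_sub, dotProduct_sub, smul_dotProduct,
      dotProduct_smul, smul_dotProduct, dotProduct_smul, ← k3,
      dotProduct_comm J (L *ᵥ z)]
    simp; ring
  have hsec : (1/(β-α)) * (u - α * y) * (β * y - u) = uh * y - uh^2 / (β-α) := by
    rw [huh]; field_simp; ring
  rw [e1, e2, e3, e4, e7, e8, hsec]
  have e9 : z ⬝ᵥ (Ahᵀ * P) *ᵥ z + z ⬝ᵥ (P * Ah) *ᵥ z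
      = -((L *ᵥ z) ⬝ᵥ (L *ᵥ z)) - (ε/2) * (z ⬝ᵥ P *ᵥ z) := by rw [e5, e6]
  have key : -((L *ᵥ z) ⬝ᵥ (L *ᵥ z)) + 2 * uh * ((L *ᵥ z) ⬝ᵥ J)
      ≤ uh^2 * (2/(β-α)) := by nlinarith [hwnn, hwe]
  have h2 : uh^2 * (2/(β-α)) = 2 * (uh^2 / (β-α)) := by ring
  nlinarith [key]

private lemma mycs {P : Matrix (Fin m) (Fin m) ℝ} (hP : P.PosDef) (C z : Fin m → ℝ) :
    (C ⬝ᵥ z)^2 ≤ (C ⬝ᵥ P⁻¹ *ᵥ C) * (z ⬝ᵥ P *ᵥ z) := by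
  have hPt : Pᵀ = P := mytranspose_eq hP.isHermitian
  set w : Fin m → ℝ := P⁻¹ *ᵥ C with hwdef
  have hC : P *ᵥ w = C := by
    rw [hwdef, mulVec_mulVec, Matrix.mul_nonsing_inv _ (isUnit_iff_isUnit_det _ |>.1 hP.isUnit),
      one_mulVec]
  have hCz : C ⬝ᵥ z = w ⬝ᵥ P *ᵥ z := by
    rw [mysymm_dot hPt w z, ← hC, dotProduct_comm]
  have hCC : C ⬝ᵥ w = w ⬝ᵥ P *ᵥ w := by
    conv_lhs => rw [← hC]
    rw [dotProduct_comm]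
  have expand : ∀ s : ℝ, (z - s • w) ⬝ᵥ P *ᵥ (z - s • w)
      = (w ⬝ᵥ P *ᵥ w) * (s * s) + (-2 * (C ⬝ᵥ z)) * s + z ⬝ᵥ P *ᵥ z := by
    intro s
    have hzw : z ⬝ᵥ P *ᵥ w = C ⬝ᵥ z := by rw [mysymm_dot hPt z w, ← hCz]
    have hwz : w ⬝ᵥ P *ᵥ z = C ⬝ᵥ z := hCz.symm
    rw [mulVec_sub, mulVec_smul, sub_dotProduct, dotProduct_sub, dotProduct_sub,
      smul_dotProduct, smul_dotProduct, dotProduct_smul, dotProduct_smul,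
      smul_eq_mul, smul_eq_mul, smul_eq_mul, smul_eq_mul, hzw, hwz]
    ring
  have hq : ∀ s : ℝ, 0 ≤ (w ⬝ᵥ P *ᵥ w) * (s * s) + (-2 * (C ⬝ᵥ z)) * s + z ⬝ᵥ P *ᵥ z :=
    fun s => (expand s) ▸ myquad_nonneg hP.posSemidef _
  have hd := discrim_le_zero hq
  rw [discrim] at hd
  rw [hCC]
  nlinarith [hd]

private lemma mycoercive {P : Matrix (Fin m) (Fin m) ℝ} (hP : P.PosDef) :
    ∃ μ > (0:ℝ), ∀ z : Fin m → ℝ, μ * ‖z‖^2 ≤ z ⬝ᵥ P *ᵥ z := by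
  rcases Nat.eq_zero_or_pos m with hm | hm
  · refine ⟨1, one_pos, fun z => ?_⟩
    subst hm
    have hz : z = 0 := Subsingleton.elim _ _
    have h0 : ‖z‖ = 0 := by rw [hz, norm_zero]
    simp [dotProduct, h0]
  · have hq : Continuous fun z : Fin m → ℝ => z ⬝ᵥ P *ᵥ z := by
      have : Continuous fun z : Fin m → ℝ => ∑ i, ∑ j, z i * (P i j * z j) := by
        refine continuous_finset_sum _ fun i _ => continuous_finset_sum _ fun j _ => ?_
        exact (continuous_apply i).mul (continuous_const.mul (continuous_apply j))
      convert this using 2 with z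
      simp [dotProduct, mulVec, Finset.mul_sum]
    haveI : Nonempty (Fin m) := ⟨⟨0, hm⟩⟩
    have hsne : (Metric.sphere (0 : Fin m → ℝ) 1).Nonempty := by
      refine ⟨fun _ => 1, ?_⟩
      simp [pi_norm_const]
    obtain ⟨z₀, hz₀S, hmin⟩ := (isCompact_sphere (0 : Fin m → ℝ) 1).exists_isMinOn hsne
      hq.continuousOn
    have hz₀ : z₀ ≠ 0 := by
      intro h
      have := mem_sphere_zero_iff_norm.mp hz₀S
      rw [h] at this; simp at this
    have hμ : 0 < z₀ ⬝ᵥ P *ᵥ z₀ := by simpa using hP.dotProduct_mulVec_pos hz₀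
    refine ⟨z₀ ⬝ᵥ P *ᵥ z₀, hμ, fun z => ?_⟩
    rcases eq_or_ne z 0 with rfl | hz
    · simp [dotProduct]
    · set s : ℝ := ‖z‖ with hs
      have hspos : 0 < s := norm_pos_iff.mpr hz
      set v : Fin m → ℝ := s⁻¹ • z with hv
      have hvs : v ∈ Metric.sphere (0 : Fin m → ℝ) 1 := by
        rw [mem_sphere_zero_iff_norm, hv, norm_smul]
        simp [abs_of_pos (inv_pos.mpr hspos), hs]
        field_simp
      have hzv : z = s • v := by
        rw [hv, smul_smul, mul_inv_cancel₀ hspos.ne', one_smul]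
      have hscale : z ⬝ᵥ P *ᵥ z = s^2 * (v ⬝ᵥ P *ᵥ v) := by
        conv_lhs => rw [hzv]
        rw [smul_dotProduct, mulVec_smul, dotProduct_smul, smul_eq_mul, smul_eq_mul]
        ring
      have hvge : z₀ ⬝ᵥ P *ᵥ z₀ ≤ v ⬝ᵥ P *ᵥ v := hmin hvs
      rw [hscale]
      nlinarith [hvge, sq_nonneg s]

private lemma mydecay (f : ℝ → ℝ) (c d T : ℝ) (hc : 0 < c)
    (hf : ∀ t, T ≤ t → ∃ v, HasDerivAt f v t ∧ v ≤ -c * f t + d) :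
    ∀ t, T ≤ t → f t ≤ d / c + (f T - d / c) * Real.exp (-c * (t - T)) := by
  set g : ℝ → ℝ := fun t => (f t - d / c) * Real.exp (c * (t - T)) with hgdef
  have hg : ∀ t, T ≤ t → ∃ v, HasDerivAt g v t ∧ v ≤ 0 := by
    intro t ht
    obtain ⟨v, hv, hvle⟩ := hf t ht
    have h1 : HasDerivAt (fun t : ℝ => c * (t - T)) c t := by
      simpa using ((hasDerivAt_id t).sub_const T).const_mul c
    have h2 := h1.exp
    refine ⟨v * Real.exp (c * (t - T)) + (f t - d / c) * (Real.exp (c * (t - T)) * c),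
      (hv.sub_const _).mul h2, ?_⟩
    have hE : 0 < Real.exp (c * (t - T)) := Real.exp_pos _
    have he : v * Real.exp (c * (t - T)) + (f t - d / c) * (Real.exp (c * (t - T)) * c)
        = Real.exp (c * (t - T)) * (v + c * f t - d) := by
      field_simp
      ring
    rw [he]
    have hw : v + c * f t - d ≤ 0 := by linarith
    nlinarith [hE, hw]
  have cont : ContinuousOn g (Set.Ici T) := fun t ht =>
    ((hg t ht).choose_spec.1.continuousAt).continuousWithinAt
  have hanti : AntitoneOn g (Set.Ici T) := by
    apply antitoneOn_of_deriv_nonpos (convex_Ici T) cont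
    · intro t ht
      rw [interior_Ici] at ht
      exact ((hg t (le_of_lt ht)).choose_spec.1).differentiableAt.differentiableWithinAt
    · intro t ht
      rw [interior_Ici] at ht
      obtain ⟨v, hv, h0⟩ := hg t (le_of_lt ht)
      rw [hv.deriv]
      exact h0
  intro t ht
  have hgle : g t ≤ g T := hanti (Set.self_mem_Ici) ht ht
  have e1 : Real.exp (c * (t - T)) * Real.exp (-c * (t - T)) = 1 := by
    rw [← Real.exp_add, (by ring : c * (t - T) + -c * (t - T) = (0:ℝ)), Real.exp_zero]
  have h2 : g t * Real.exp (-c * (t - T)) ≤ g T * Real.exp (-c * (t - T)) :=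
    mul_le_mul_of_nonneg_right hgle (Real.exp_pos _).le
  have h3 : g t * Real.exp (-c * (t - T)) = f t - d / c := by
    rw [hgdef]
    simp only
    rw [mul_assoc, e1, mul_one]
  have h4 : g T = f T - d / c := by
    rw [hgdef]
    simp
  rw [h3, h4] at h2
  linarith

private lemma mydecay_eventually (f : ℝ → ℝ) (c d T : ℝ) (hc : 0 < c) (δ : ℝ) (hδ : 0 < δ)
    (hf : ∀ t, T ≤ t → ∃ v, HasDerivAt f v t ∧ v ≤ -c * f t + d) :
    ∀ᶠ t in atTop, f t ≤ d / c + δ := by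
  have hb := mydecay f c d T hc hf
  have h1 : Tendsto (fun t : ℝ => t - T) atTop atTop :=
    tendsto_atTop_add_const_right _ _ tendsto_id
  have h2 : Tendsto (fun t : ℝ => -c * (t - T)) atTop atBot := by
    exact (tendsto_neg_atBot_iff.mpr (h1.const_mul_atTop hc)).congr (fun t => by ring)
  have h3 : Tendsto (fun t : ℝ => (f T - d / c) * Real.exp (-c * (t - T))) atTop (nhds 0) := by
    have := (Real.tendsto_exp_atBot.comp h2).const_mul (f T - d / c)
    simpa using this
  filter_upwards [h3.eventually_lt_const hδ, eventually_ge_atTop T] with t h4 h5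
  have := hb t h5
  linarith

private lemma mystepA {A : Matrix (Fin m) (Fin m) ℝ} {B C : Fin m → ℝ}
    {α β ε Mi : ℝ} (hαβ : α < β) (hε : 0 < ε) (hMi : 0 < Mi)
    {P : Matrix (Fin m) (Fin m) ℝ} (hP : P.PosDef)
    {L : Matrix (Fin p) (Fin m) ℝ} {J : Fin p → ℝ}
    (k1 : P * (A - α • vecMulVec B C) + (A - α • vecMulVec B C)ᵀ * P
          = -(Lᵀ * L) - (ε / 2) • P)
    (k2 : P *ᵥ B = C - Lᵀ *ᵥ J)
    (k3 : J ⬝ᵥ J = 2 / (β - α))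
    {x : ℝ → Fin m → ℝ} {u : ℝ → ℝ}
    (hx : ∀ t, 0 ≤ t → HasDerivAt x (A *ᵥ (x t) - u t • B) t)
    (T : ℝ) (hT : 0 ≤ T)
    (hsec : ∀ t, T ≤ t →
      -Mi < (1/(β-α)) * (u t - α * (C ⬝ᵥ x t)) * (β * (C ⬝ᵥ x t) - u t))
    {η : ℝ} (hη : 0 < η) :
    ∀ᶠ t in atTop, |C ⬝ᵥ x t| < 2 * Real.sqrt ((Mi/ε) * (C ⬝ᵥ P⁻¹ *ᵥ C)) + η := by
  set V : ℝ → ℝ := fun t => x t ⬝ᵥ P *ᵥ x t with hV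
  have hPt := mytranspose_eq hP.isHermitian
  have hder : ∀ t, T ≤ t → ∃ v, HasDerivAt V v t ∧ v ≤ -(ε/2) * V t + 2*Mi := by
    intro t ht
    have ht0 : (0:ℝ) ≤ t := le_trans hT ht
    refine ⟨_, myhasDerivAt_quadForm P (hx t ht0), ?_⟩
    have hq := myquad_ineq A B C α β ε hαβ P hPt L J k1 k2 k3 (x t) (u t)
    have hs := hsec t ht
    calc (A *ᵥ x t - u t • B) ⬝ᵥ P *ᵥ x t + x t ⬝ᵥ P *ᵥ (A *ᵥ x t - u t • B)
        ≤ -(ε/2) * (x t ⬝ᵥ P *ᵥ x t)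
          - 2 * ((1/(β-α)) * (u t - α * (C ⬝ᵥ x t)) * (β * (C ⬝ᵥ x t) - u t)) := hq
      _ ≤ -(ε/2) * V t + 2 * Mi := by rw [hV]; simp only; linarith
  set K0 : ℝ := C ⬝ᵥ P⁻¹ *ᵥ C with hK0def
  have hK0 : 0 ≤ K0 := myquad_nonneg hP.inv.posSemidef C
  set r : ℝ := 2 * Real.sqrt ((Mi/ε) * K0) with hrdef
  have hr : 0 ≤ r := by positivity
  have hr2 : r^2 = 4 * ((Mi/ε) * K0) := by
    rw [hrdef, mul_pow, Real.sq_sqrt (by positivity)]; ring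
  set δ : ℝ := η^2 / (K0 + 1) with hδdef
  have hδ : 0 < δ := by positivity
  have hev := mydecay_eventually V (ε/2) (2*Mi) T (by positivity) δ hδ hder
  filter_upwards [hev] with t hVt
  have hcs := mycs hP C (x t)
  have h1 : (C ⬝ᵥ x t)^2 ≤ K0 * (2*Mi/(ε/2) + δ) := by
    calc (C ⬝ᵥ x t)^2 ≤ K0 * V t := hcs
      _ ≤ K0 * (2*Mi/(ε/2) + δ) := mul_le_mul_of_nonneg_left hVt hK0
  have h2 : K0 * (2*Mi/(ε/2)) = r^2 := by rw [hr2]; field_simp; ring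
  have h3 : K0 * δ < η^2 := by
    rw [hδdef]
    rw [mul_div_assoc] at *
    have h4 : K0 / (K0 + 1) < 1 := by
      rw [div_lt_one (by linarith)]; linarith
    calc K0 * (η^2 / (K0+1)) = (K0 / (K0+1)) * η^2 := by ring
      _ < 1 * η^2 := by
          apply mul_lt_mul_of_pos_right h4 (by positivity)
      _ = η^2 := one_mul _
  have h4 : (C ⬝ᵥ x t)^2 < (r + η)^2 := by nlinarith [h1, h2, h3]
  have h5 := Real.sqrt_lt_sqrt (sq_nonneg (C ⬝ᵥ x t)) h4
  rwa [Real.sqrt_sq_eq_abs, Real.sqrt_sq (by positivity)] at h5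

private lemma mystepB {A : Matrix (Fin m) (Fin m) ℝ} {B C : Fin m → ℝ}
    {α β ε : ℝ} (hαβ : α < β) (hε : 0 < ε)
    {P : Matrix (Fin m) (Fin m) ℝ} (hP : P.PosDef)
    {L : Matrix (Fin p) (Fin m) ℝ} {J : Fin p → ℝ}
    (k1 : P * (A - α • vecMulVec B C) + (A - α • vecMulVec B C)ᵀ * P
          = -(Lᵀ * L) - (ε / 2) • P)
    (k2 : P *ᵥ B = C - Lᵀ *ᵥ J)
    (k3 : J ⬝ᵥ J = 2 / (β - α))
    {x : ℝ → Fin m → ℝ} {u : ℝ → ℝ}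
    (hx : ∀ t, 0 ≤ t → HasDerivAt x (A *ᵥ (x t) - u t • B) t)
    (T : ℝ) (hT : 0 ≤ T)
    (hsec : ∀ t, T ≤ t →
      0 ≤ (u t - α * (C ⬝ᵥ x t)) * (β * (C ⬝ᵥ x t) - u t)) :
    Tendsto x atTop (nhds 0) := by
  set V : ℝ → ℝ := fun t => x t ⬝ᵥ P *ᵥ x t with hV
  have hPt := mytranspose_eq hP.isHermitian
  have hba : 0 < 1 / (β - α) := by
    apply div_pos one_pos; linarith
  have hder : ∀ t, T ≤ t → ∃ v, HasDerivAt V v t ∧ v ≤ -(ε/2) * V t + 0 := by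
    intro t ht
    have ht0 : (0:ℝ) ≤ t := le_trans hT ht
    refine ⟨_, myhasDerivAt_quadForm P (hx t ht0), ?_⟩
    have hq := myquad_ineq A B C α β ε hαβ P hPt L J k1 k2 k3 (x t) (u t)
    have hs := hsec t ht
    have hsnn : 0 ≤ (1/(β-α)) * (u t - α * (C ⬝ᵥ x t)) * (β * (C ⬝ᵥ x t) - u t) := by
      rw [mul_assoc]
      exact mul_nonneg hba.le hs
    have hVt : V t = x t ⬝ᵥ P *ᵥ x t := rfl
    calc (A *ᵥ x t - u t • B) ⬝ᵥ P *ᵥ x t + x t ⬝ᵥ P *ᵥ (A *ᵥ x t - u t • B)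
        ≤ -(ε/2) * (x t ⬝ᵥ P *ᵥ x t)
          - 2 * ((1/(β-α)) * (u t - α * (C ⬝ᵥ x t)) * (β * (C ⬝ᵥ x t) - u t)) := hq
      _ ≤ -(ε/2) * V t + 0 := by rw [hVt]; linarith
  have hbound := mydecay V (ε/2) 0 T (by positivity) hder
  have hV0 : ∀ t, 0 ≤ V t := fun t => myquad_nonneg hP.posSemidef _
  have h1 : Tendsto (fun t : ℝ => t - T) atTop atTop :=
    tendsto_atTop_add_const_right _ _ tendsto_id
  have h2' : Tendsto (fun t : ℝ => (ε/2) * (t - T)) atTop atTop :=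
    h1.const_mul_atTop (by positivity : (0:ℝ) < ε/2)
  have h2 : Tendsto (fun t : ℝ => -(ε/2) * (t - T)) atTop atBot :=
    (tendsto_neg_atBot_iff.mpr h2').congr fun t => by ring
  have hbound' : ∀ t, T ≤ t → V t ≤ V T * Real.exp (-(ε/2) * (t - T)) := by
    intro t ht
    have := hbound t ht
    rw [zero_div] at this
    linarith
  have h3 : Tendsto (fun t : ℝ => V T * Real.exp (-(ε/2) * (t - T))) atTop (nhds 0) := by
    have := (Real.tendsto_exp_atBot.comp h2).const_mul (V T)
    simpa using this
  have hVtend : Tendsto V atTop (nhds 0) := by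
    apply tendsto_of_tendsto_of_tendsto_of_le_of_le' tendsto_const_nhds h3
    · exact Eventually.of_forall hV0
    · filter_upwards [eventually_ge_atTop T] with t ht using hbound' t ht
  obtain ⟨μ, hμ, hco⟩ := mycoercive hP
  have hn2 : Tendsto (fun t => ‖x t‖^2) atTop (nhds 0) := by
    have hupper : ∀ t, ‖x t‖^2 ≤ V t / μ := by
      intro t
      rw [le_div_iff₀ hμ]
      have := hco (x t)
      linarith [hco (x t)]
    have hdiv : Tendsto (fun t => V t / μ) atTop (nhds 0) := by
      have := hVtend.div_const μ
      simpa using this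
    apply tendsto_of_tendsto_of_tendsto_of_le_of_le' tendsto_const_nhds hdiv
    · exact Eventually.of_forall fun t => sq_nonneg _
    · exact Eventually.of_forall hupper
  have hn1 : Tendsto (fun t => ‖x t‖) atTop (nhds 0) := by
    have hsq : Tendsto (fun t => Real.sqrt (‖x t‖^2)) atTop (nhds 0) := by
      have h := (Real.continuous_sqrt.tendsto 0).comp hn2
      rw [Real.sqrt_zero] at h
      exact h
    exact hsq.congr fun t => Real.sqrt_sq (norm_nonneg _)
  exact tendsto_zero_iff_norm_tendsto_zero.mpr hn1

end KStepAux

/-- Theorem 3 (K-step sequential circle criterion), state-space form for a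
strictly proper linear block: at each step the weak circle criterion shrinks
the output bound, tightening the sector in which the nonlinearity is explored,
until a true sector condition holds on the final region and the standard
Circle Criterion yields global asymptotic stability. -/
theorem K_step_sequential_circle_criterion {m p : ℕ}
    (A : Matrix (Fin m) (Fin m) ℝ) (B : Fin m → ℝ) (C : Fin m → ℝ)
    (K : ℕ) (hK : 2 ≤ K)
    (α β ε M : ℕ → ℝ)
    (hαβ : ∀ i, 1 ≤ i → i ≤ K → α i < β i)
    (hε : ∀ i, 1 ≤ i → i ≤ K → 0 < ε i)
    (hM : ∀ i, 1 ≤ i → i ≤ K - 1 → 0 < M i)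
    (P : ℕ → Matrix (Fin m) (Fin m) ℝ)
    (hP : ∀ i, 1 ≤ i → i ≤ K → (P i).PosDef)
    (L : ℕ → Matrix (Fin p) (Fin m) ℝ) (J : ℕ → Fin p → ℝ)
    (hKYP1 : ∀ i, 1 ≤ i → i ≤ K →
        P i * (A - α i • vecMulVec B C) + (A - α i • vecMulVec B C)ᵀ * P i
          = -((L i)ᵀ * L i) - (ε i / 2) • P i)
    (hKYP2 : ∀ i, 1 ≤ i → i ≤ K → (P i).mulVec B = C - (L i)ᵀ.mulVec (J i))
    (hKYP3 : ∀ i, 1 ≤ i → i ≤ K → J i ⬝ᵥ J i = 2 / (β i - α i))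
    (n : ℝ → ℝ → ℝ) (hn : Continuous fun q : ℝ × ℝ => n q.1 q.2)
    (hfirst : ∀ t y,
      -M 1 < (1 / (β 1 - α 1)) * (n t y - α 1 * y) * (β 1 * y - n t y))
    (hstep : ∀ i, 1 ≤ i → i ≤ K - 2 → ∃ η > (0 : ℝ), ∀ t y,
      |y| < 2 * Real.sqrt ((M i / ε i) * (C ⬝ᵥ (P i)⁻¹.mulVec C)) + η →
        -M (i + 1) < (1 / (β (i + 1) - α (i + 1))) * (n t y - α (i + 1) * y)
            * (β (i + 1) * y - n t y))
    (hlast : ∃ η > (0 : ℝ), ∀ t y,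
      |y| < 2 * Real.sqrt ((M (K - 1) / ε (K - 1))
          * (C ⬝ᵥ (P (K - 1))⁻¹.mulVec C)) + η →
        0 ≤ (n t y - α K * y) * (β K * y - n t y))
    (x : ℝ → Fin m → ℝ)
    (hx : ∀ t, 0 ≤ t → HasDerivAt x (A.mulVec (x t) - n t (C ⬝ᵥ x t) • B) t) :
    Tendsto x atTop (nhds 0) := by
  have hx' : ∀ t, 0 ≤ t →
      HasDerivAt x (A *ᵥ (x t) - (fun s => n s (C ⬝ᵥ x s)) t • B) t := hx
  have H : ∀ i, 1 ≤ i → i ≤ K - 1 → ∃ T, 0 ≤ T ∧ ∀ t, T ≤ t →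
      -M i < (1/(β i - α i)) * (n t (C ⬝ᵥ x t) - α i * (C ⬝ᵥ x t))
        * (β i * (C ⬝ᵥ x t) - n t (C ⬝ᵥ x t)) := by
    intro i hi1
    induction i, hi1 using Nat.le_induction with
    | base => exact fun _ => ⟨0, le_refl 0, fun t _ => hfirst t (C ⬝ᵥ x t)⟩
    | succ i hi IH =>
      intro hile
      have hiK : i ≤ K - 1 := by omega
      have hiK' : i ≤ K := by omega
      obtain ⟨T, hT0, hsec⟩ := IH hiK
      obtain ⟨η, hη, hsec'⟩ := hstep i hi (by omega)
      have hev := mystepA (hαβ i hi hiK') (hε i hi hiK') (hM i hi hiK) (hP i hi hiK')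
        (hKYP1 i hi hiK') (hKYP2 i hi hiK') (hKYP3 i hi hiK') hx' T hT0 hsec hη
      rw [eventually_atTop] at hev
      obtain ⟨T', hT'⟩ := hev
      refine ⟨max T' 0, le_max_right _ _, fun t ht => ?_⟩
      exact hsec' t (C ⬝ᵥ x t) (hT' t (le_trans (le_max_left _ _) ht))
  obtain ⟨T, hT0, hsec⟩ := H (K-1) (by omega) (le_refl _)
  obtain ⟨η, hη, hlast'⟩ := hlast
  have hev := mystepA (hαβ (K-1) (by omega) (by omega)) (hε (K-1) (by omega) (by omega))
    (hM (K-1) (by omega) (le_refl _)) (hP (K-1) (by omega) (by omega))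
    (hKYP1 (K-1) (by omega) (by omega)) (hKYP2 (K-1) (by omega) (by omega))
    (hKYP3 (K-1) (by omega) (by omega)) hx' T hT0 hsec hη
  rw [eventually_atTop] at hev
  obtain ⟨T', hT'⟩ := hev
  have hsecK : ∀ t, max T' 0 ≤ t →
      0 ≤ ((fun s => n s (C ⬝ᵥ x s)) t - α K * (C ⬝ᵥ x t))
        * (β K * (C ⬝ᵥ x t) - (fun s => n s (C ⬝ᵥ x s)) t) :=
    fun t ht => hlast' t (C ⬝ᵥ x t) (hT' t (le_trans (le_max_left _ _) ht))
  exact mystepB (hαβ K (by omega) (le_refl _)) (hε K (by omega) (le_refl _))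
    (hP K (by omega) (le_refl _)) (hKYP1 K (by omega) (le_refl _))
    (hKYP2 K (by omega) (le_refl _)) (hKYP3 K (by omega) (le_refl _)) hx'
    (max T' 0) (le_max_right _ _) hsecK
end
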